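/- Let V be a Banach space, T > 0, z₁,z₂ > 1, and let a ∈ 𝒞𝒞_{2,2}(V). Assume: (i) δ₁a admits a finite decomposition δ₁a = Σ_k h_k with h_k ∈ 𝒞𝒞_{3,2}(V) and, for each k, constants C_k ≥ 0 and γ_k ∈ (0,z₁) such that |h_k((s₁,u,s₂),(t₁,t₂))| ≤ C_k |u−s₁|^{γ_k} |s₂−u|^{z₁−γ_k} for all arguments; (ii) symmetrically, δ₂a admits a finite decomposition δ₂a = Σ_k h′_k with |h′_k((s₁,s₂),(t₁,v,t₂))| ≤ C′_k |v−t₁|^{γ′_k} |t₂−v|^{z₂−γ′_k}, γ′_k ∈ (0,z₂); (iii) ‖δa‖_{z₁,z₂} < ∞. Then there exists a continuous function f : [0,T]² → V such that, for every rectangle [s,s′]×[t,t′] ⊆ [0,T]², the Riemann sums Σ_{i,j} a((σ_i,σ_{i+1}),(τ_j,τ_{j+1})) over grid partitions Π converge, as |Π| → 0, to f(s′,t′) − f(s,t′) − f(s′,t) + f(s,t). -/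

import Mathlib

open Set

section
variable {V : Type*} [NormedAddCommGroup V]

/-- `δ₁a ∈ 𝒞𝒞_{3,2}(V)` for `a ∈ 𝒞𝒞_{2,2}(V)`:
`(δ₁a)((s₁,u,s₂),(t₁,t₂)) = a(u,s₂;·) − a(s₁,s₂;·) + a(s₁,u;·)`. -/
def del1 (a : ℝ → ℝ → ℝ → ℝ → V) (s₁ u s₂ t₁ t₂ : ℝ) : V :=
  a u s₂ t₁ t₂ - a s₁ s₂ t₁ t₂ + a s₁ u t₁ t₂

/-- `δ₂a ∈ 𝒞𝒞_{2,3}(V)` for `a ∈ 𝒞𝒞_{2,2}(V)`. -/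
def del2 (a : ℝ → ℝ → ℝ → ℝ → V) (s₁ s₂ t₁ v t₂ : ℝ) : V :=
  a s₁ s₂ v t₂ - a s₁ s₂ t₁ t₂ + a s₁ s₂ t₁ v

/-- `δa = δ₂δ₁a ∈ 𝒞𝒞_{3,3}(V)` for `a ∈ 𝒞𝒞_{2,2}(V)`. -/
def delFull (a : ℝ → ℝ → ℝ → ℝ → V) (s₁ u₁ s₂ t₁ u₂ t₂ : ℝ) : V :=
  del1 a s₁ u₁ s₂ u₂ t₂ - del1 a s₁ u₁ s₂ t₁ t₂ + del1 a s₁ u₁ s₂ t₁ u₂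

end

/-- `σ` is a grid of `[a,b]` with `m` subintervals. -/
def IsGrid (a b : ℝ) (m : ℕ) (σ : ℕ → ℝ) : Prop :=
  σ 0 = a ∧ σ m = b ∧ ∀ i < m, σ i < σ (i + 1)

/-- The mesh of the grid `σ` is at most `η`. -/
def MeshLE (m : ℕ) (σ : ℕ → ℝ) (η : ℝ) : Prop :=
  ∀ i < m, σ (i + 1) - σ i ≤ η



open Set Finset Filter

namespace Stmt3Aux


lemma isGrid_mono {p q : ℝ} {m : ℕ} {σ : ℕ → ℝ} (h : IsGrid p q m σ) :
    ∀ {i j : ℕ}, i ≤ j → j ≤ m → σ i ≤ σ j := by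
  intro i j hij hjm
  induction j with
  | zero => simp_all
  | succ k ih =>
    rcases Nat.lt_or_ge i (k+1) with hlt | hge
    · have hik : i ≤ k := Nat.lt_succ_iff.mp hlt
      exact le_trans (ih hik (le_trans (Nat.le_succ k) hjm))
        (le_of_lt (h.2.2 k (Nat.lt_of_succ_le hjm)))
    · have : i = k + 1 := le_antisymm hij hge
      simp [this]

lemma isGrid_le {p q : ℝ} {m : ℕ} {σ : ℕ → ℝ} (h : IsGrid p q m σ) : p ≤ q := by
  have := isGrid_mono h (Nat.zero_le m) (le_refl m)
  rw [h.1, h.2.1] at this; exact this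

lemma isGrid_mem {p q : ℝ} {m : ℕ} {σ : ℕ → ℝ} (h : IsGrid p q m σ) {i : ℕ} (hi : i ≤ m) :
    p ≤ σ i ∧ σ i ≤ q := by
  constructor
  · have := isGrid_mono h (Nat.zero_le i) hi; rwa [h.1] at this
  · have := isGrid_mono h hi (le_refl m); rwa [h.2.1] at this

lemma isGrid_eq_forces {p : ℝ} {m : ℕ} {σ : ℕ → ℝ} (h : IsGrid p p m σ) : m = 0 := by
  by_contra hm
  have h1 : σ 0 < σ 1 := h.2.2 0 (Nat.pos_of_ne_zero hm)
  have := isGrid_mono h (Nat.one_le_iff_ne_zero.mpr hm) (le_refl m)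
  rw [h.1, h.2.1] at *
  linarith [this]

noncomputable def zK (z : ℝ) : ℝ := ∑' n : ℕ, ((n : ℝ) ^ z)⁻¹

lemma zK_nonneg (z : ℝ) : 0 ≤ zK z :=
  tsum_nonneg fun n => by positivity

lemma sum_range_rpow_inv_le {z : ℝ} (hz : 1 < z) (r : ℕ) :
    ∑ j ∈ Finset.range r, ((j : ℝ) ^ z)⁻¹ ≤ zK z :=
  Summable.sum_le_tsum _ (fun n _ => by positivity) (Real.summable_nat_rpow_inv.mpr hz)

/-- Young's point-removal estimate (1D sewing coarsening). -/
theorem youngA {V : Type*} [NormedAddCommGroup V] {z D p q : ℝ} (hz : 1 < z) (hD : 0 ≤ D)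
    (g : ℝ → ℝ → V)
    (hδ : ∀ x u y, p ≤ x → x ≤ u → u ≤ y → y ≤ q →
      ‖g x y - g x u - g u y‖ ≤ D * (y - x) ^ z) :
    ∀ (r : ℕ) (u : ℕ → ℝ), IsGrid p q r u →
      ‖(∑ l ∈ Finset.range r, g (u l) (u (l + 1))) - g p q‖
        ≤ D * 2 ^ z * (q - p) ^ z * zK z := by
  have hz0 : (0:ℝ) < z := by linarith
  -- main induction with partial sums
  suffices H : ∀ (r : ℕ) (u : ℕ → ℝ), IsGrid p q r u →
      ‖(∑ l ∈ Finset.range r, g (u l) (u (l + 1))) - g p q‖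
        ≤ D * 2 ^ z * (q - p) ^ z * ∑ j ∈ Finset.range r, ((j : ℝ) ^ z)⁻¹ by
    intro r u hu
    refine le_trans (H r u hu) ?_
    have hqp : (0:ℝ) ≤ q - p := by linarith [isGrid_le hu]
    have : (0:ℝ) ≤ D * 2 ^ z * (q - p) ^ z := by positivity
    exact mul_le_mul_of_nonneg_left (sum_range_rpow_inv_le hz r) this
  intro r
  induction r using Nat.strong_induction_on with
  | _ r ih =>
    intro u hu
    have hqp : (0:ℝ) ≤ q - p := by linarith [isGrid_le hu]
    match r with
    | 0 =>
      -- p = q, and g p p = 0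
      have hpq : p = q := by rw [← hu.1, ← hu.2.1]
      subst hpq
      have h0 := hδ p p p le_rfl le_rfl le_rfl le_rfl
      have hg : g p p = 0 := by
        have e : g p p - g p p - g p p = -(g p p) := by abel
        rw [e, norm_neg, sub_self, Real.zero_rpow (ne_of_gt hz0), mul_zero] at h0
        exact norm_le_zero_iff.mp h0
      simp [hg]
    | 1 =>
      have h0 : u 0 = p := hu.1
      have h1 : u 1 = q := hu.2.1
      simp [h0, h1]
      positivity
    | (r + 2) =>
      -- pigeonhole: find an interior index with small combined gap
      set R := r + 2 with hR
      have hmono : ∀ {i j : ℕ}, i ≤ j → j ≤ R → u i ≤ u j := fun hij hjm => isGrid_mono hu hij hjm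
      have key : ∃ i, 1 ≤ i ∧ i < R ∧ u (i+1) - u (i-1) ≤ 2 * (q - p) / (R - 1 : ℕ) := by
        by_contra hcon
        push_neg at hcon
        have hlt : ∀ i ∈ Finset.Ico 1 R, 2 * (q - p) / (R - 1 : ℕ) < u (i+1) - u (i-1) := by
          intro i hi
          rcases Finset.mem_Ico.mp hi with ⟨h1, h2⟩
          exact hcon i h1 h2
        have hsum : (Finset.Ico 1 R).sum (fun i => 2 * (q - p) / (R - 1 : ℕ))
            < (Finset.Ico 1 R).sum (fun i => u (i+1) - u (i-1)) := by
          apply Finset.sum_lt_sum_of_nonempty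
          · exact Finset.nonempty_Ico.mpr (by omega)
          · exact hlt
        have hcard : (Finset.Ico 1 R).card = R - 1 := by simp
        have hleft : (Finset.Ico 1 R).sum (fun i => 2 * (q - p) / (R - 1 : ℕ)) = 2 * (q - p) := by
          rw [Finset.sum_const, hcard, nsmul_eq_mul]
          have : ((R - 1 : ℕ) : ℝ) ≠ 0 := Nat.cast_ne_zero.mpr (by omega)
          field_simp
        -- telescoping right sum
        have hright : (Finset.Ico 1 R).sum (fun i => u (i+1) - u (i-1)) ≤ 2 * (q - p) := by
          have hsplit : ∀ i ∈ Finset.Ico 1 R, u (i+1) - u (i-1) = (u (i+1) - u i) + (u i - u (i-1)) := by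
            intro i _; ring
          rw [Finset.sum_congr rfl hsplit, Finset.sum_add_distrib]
          have t1 : (Finset.Ico 1 R).sum (fun i => u (i+1) - u i) = u R - u 1 := by
            have := Finset.sum_Ico_eq_sum_range (fun i => u (i+1) - u i) 1 R
            rw [this]
            have : (∑ k ∈ Finset.range (R - 1), (u (1 + k + 1) - u (1 + k)))
                = u (1 + (R-1)) - u 1 := by
              have := Finset.sum_range_sub (fun k => u (1 + k)) (R - 1)
              simpa [add_assoc, add_comm, add_left_comm] using this
            rw [this]
            have e : 1 + (R-1) = R := by omega
            rw [e]
          have t2 : (Finset.Ico 1 R).sum (fun i => u i - u (i-1)) = u (R-1) - u 0 := by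
            have := Finset.sum_Ico_eq_sum_range (fun i => u i - u (i-1)) 1 R
            rw [this]
            have : (∑ k ∈ Finset.range (R - 1), (u (1 + k) - u (1 + k - 1)))
                = u (R-1) - u 0 := by
              have h2 := Finset.sum_range_sub (fun k => u k) (R - 1)
              have : ∀ k, u (1 + k) - u (1 + k - 1) = u (k + 1) - u k := by
                intro k; congr 2 <;> omega
              rw [Finset.sum_congr rfl (fun k _ => this k), h2]
            rw [this]
          rw [t1, t2, hu.1]
          have e1 : u R = q := hu.2.1
          have e2 : u 1 ≥ p := by rw [← hu.1]; exact hmono (Nat.zero_le 1) (by omega)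
          have e3 : u (R - 1) ≤ q := by rw [← hu.2.1]; exact hmono (by omega) (le_refl R)
          linarith
        rw [hleft] at hsum
        linarith
      obtain ⟨i, hi1, hiR, hgap⟩ := key
      -- removal grid
      set v : ℕ → ℝ := fun l => if l < i then u l else u (l + 1) with hv
      have hvgrid : IsGrid p q (R - 1) v := by
        refine ⟨?_, ?_, ?_⟩
        · simp only [hv]; rw [if_pos (by omega : 0 < i)]; exact hu.1
        · simp only [hv]
          rw [if_neg (by omega : ¬ (R - 1 < i))]
          have : R - 1 + 1 = R := by omega
          rw [this]; exact hu.2.1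
        · intro l hl
          simp only [hv]
          by_cases h1 : l + 1 < i
          · rw [if_pos (by omega), if_pos h1]
            exact hu.2.2 l (by omega)
          · by_cases h2 : l < i
            · -- l + 1 = i
              have hli : l + 1 = i := by omega
              rw [if_pos h2, if_neg (by omega)]
              calc u l < u (l+1) := hu.2.2 l (by omega)
                _ < u (l + 1 + 1) := hu.2.2 (l+1) (by omega)
            · rw [if_neg h2, if_neg (by omega)]
              exact hu.2.2 (l+1) (by omega)
      -- sum identity
      have hsum_id : (∑ l ∈ Finset.range R, g (u l) (u (l + 1)))
          = (∑ l ∈ Finset.range (R-1), g (v l) (v (l + 1)))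
            + (g (u (i-1)) (u i) + g (u i) (u (i+1)) - g (u (i-1)) (u (i+1))) := by
        have split_u : (∑ l ∈ Finset.range R, g (u l) (u (l + 1)))
            = (∑ l ∈ Finset.range (i-1), g (u l) (u (l + 1)))
              + (g (u (i-1)) (u i) + g (u i) (u (i+1)))
              + ∑ l ∈ Finset.Ico (i+1) R, g (u l) (u (l + 1)) := by
          rw [← Finset.sum_range_add_sum_Ico _ (by omega : i + 1 ≤ R)]
          congr 1
          rw [← Finset.sum_range_add_sum_Ico _ (by omega : i - 1 ≤ i + 1)]
          congr 1
          have : Finset.Ico (i-1) (i+1) = {i-1, i} := by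
            ext x; simp [Finset.mem_Ico]; omega
          rw [this, Finset.sum_insert (by simp; omega), Finset.sum_singleton]
          have : i - 1 + 1 = i := by omega
          rw [this]
        have split_v : (∑ l ∈ Finset.range (R-1), g (v l) (v (l + 1)))
            = (∑ l ∈ Finset.range (i-1), g (u l) (u (l + 1)))
              + g (u (i-1)) (u (i+1))
              + ∑ l ∈ Finset.Ico (i+1) R, g (u l) (u (l + 1)) := by
          rw [← Finset.sum_range_add_sum_Ico _ (by omega : i ≤ R - 1)]
          congr 1
          · rw [← Finset.sum_range_add_sum_Ico _ (by omega : i - 1 ≤ i)]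
            congr 1
            · apply Finset.sum_congr rfl
              intro l hl
              have hl' : l < i - 1 := Finset.mem_range.mp hl
              simp only [hv]
              rw [if_pos (by omega), if_pos (by omega)]
            · have : Finset.Ico (i-1) i = {i-1} := by
                ext x; simp [Finset.mem_Ico]; omega
              rw [this, Finset.sum_singleton]
              simp only [hv]
              rw [if_pos (by omega), if_neg (by omega)]
              have e : i - 1 + 1 + 1 = i + 1 := by omega
              rw [e]
          · rw [Finset.sum_Ico_eq_sum_range, Finset.sum_Ico_eq_sum_range]
            have hlen : R - 1 - i = R - (i+1) := by omega
            rw [hlen]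
            apply Finset.sum_congr rfl
            intro l _
            simp only [hv]
            rw [if_neg (by omega), if_neg (by omega)]
            congr 2 <;> omega
        rw [split_u, split_v]; abel
      -- estimate
      have hrm : ‖g (u (i-1)) (u (i+1)) - g (u (i-1)) (u i) - g (u i) (u (i+1))‖
          ≤ D * (u (i+1) - u (i-1)) ^ z := by
        apply hδ
        · exact (isGrid_mem hu (by omega)).1
        · exact hmono (by omega) (by omega)
        · exact hmono (by omega) (by omega)
        · exact (isGrid_mem hu (by omega)).2
      have hgap0 : 0 ≤ u (i+1) - u (i-1) := by
        have := hmono (by omega : i - 1 ≤ i + 1) (by omega); linarith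
      have hrm2 : ‖g (u (i-1)) (u (i+1)) - g (u (i-1)) (u i) - g (u i) (u (i+1))‖
          ≤ D * 2 ^ z * (q - p) ^ z * (((R-1 : ℕ) : ℝ) ^ z)⁻¹ := by
        refine le_trans hrm ?_
        have hb : (u (i+1) - u (i-1)) ^ z ≤ (2 * (q - p) / ((R-1 : ℕ) : ℝ)) ^ z :=
          Real.rpow_le_rpow hgap0 hgap (le_of_lt hz0)
        have hR1 : (0:ℝ) < ((R-1 : ℕ) : ℝ) := by
          simp only [Nat.cast_pos]; omega
        have hexp : (2 * (q - p) / ((R-1:ℕ) : ℝ)) ^ z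
            = 2 ^ z * (q - p) ^ z * (((R-1:ℕ) : ℝ) ^ z)⁻¹ := by
          rw [div_eq_mul_inv, Real.mul_rpow (by positivity) (by positivity),
            Real.mul_rpow (by norm_num) hqp, Real.inv_rpow (le_of_lt hR1)]
        calc D * (u (i+1) - u (i-1)) ^ z ≤ D * (2 * (q - p) / ((R-1:ℕ):ℝ)) ^ z :=
              mul_le_mul_of_nonneg_left hb hD
          _ = D * 2 ^ z * (q - p) ^ z * (((R-1:ℕ):ℝ) ^ z)⁻¹ := by rw [hexp]; ring
      have ihv := ih (R - 1) (by omega) v hvgrid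
      calc ‖(∑ l ∈ Finset.range R, g (u l) (u (l + 1))) - g p q‖
          = ‖((∑ l ∈ Finset.range (R-1), g (v l) (v (l + 1))) - g p q)
              + -(g (u (i-1)) (u (i+1)) - g (u (i-1)) (u i) - g (u i) (u (i+1)))‖ := by
            rw [hsum_id]; congr 1; abel
        _ ≤ ‖(∑ l ∈ Finset.range (R-1), g (v l) (v (l + 1))) - g p q‖
              + ‖g (u (i-1)) (u (i+1)) - g (u (i-1)) (u i) - g (u i) (u (i+1))‖ := by
            refine le_trans (norm_add_le _ _) ?_
            rw [norm_neg]
        _ ≤ D * 2 ^ z * (q - p) ^ z * (∑ j ∈ Finset.range (R-1), ((j : ℝ) ^ z)⁻¹)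
              + D * 2 ^ z * (q - p) ^ z * (((R-1:ℕ):ℝ) ^ z)⁻¹ := add_le_add ihv hrm2
        _ = D * 2 ^ z * (q - p) ^ z * (∑ j ∈ Finset.range R, ((j : ℝ) ^ z)⁻¹) := by
            rw [← mul_add]
            congr 1
            have : R = (R - 1) + 1 := by omega
            rw [this, Finset.sum_range_succ]
            simp

variable {V : Type*} [NormedAddCommGroup V]
variable {T z₁ z₂ B₁ B₂ B₃ : ℝ} {a : ℝ → ℝ → ℝ → ℝ → V}

lemma norm_le_sub_add' (A B : V) : ‖A‖ ≤ ‖A - B‖ + ‖B‖ := by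
  simpa using norm_add_le (A - B) B

lemma delFull_eq_del2 (a : ℝ → ℝ → ℝ → ℝ → V) (x u y t₁ v t₂ : ℝ) :
    delFull a x u y t₁ v t₂
      = del2 a u y t₁ v t₂ - del2 a x y t₁ v t₂ + del2 a x u t₁ v t₂ := by
  simp only [delFull, del1, del2]; abel

variable {T z₁ z₂ B₁ B₂ B₃ : ℝ} {a : ℝ → ℝ → ℝ → ℝ → V}

theorem blockEstS (hz₁ : 1 < z₁) (hz₂ : 1 < z₂) (hB₁ : 0 ≤ B₁) (hB₃ : 0 ≤ B₃)
    (bd1 : ∀ x u y t₁ t₂ : ℝ, 0 ≤ x → x ≤ u → u ≤ y → y ≤ T → t₁ ∈ Icc (0:ℝ) T →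
      t₂ ∈ Icc (0:ℝ) T → ‖del1 a x u y t₁ t₂‖ ≤ B₁ * (y - x) ^ z₁)
    (bd3 : ∀ x u y t₁ v t₂ : ℝ, 0 ≤ x → x ≤ u → u ≤ y → y ≤ T → 0 ≤ t₁ → t₁ ≤ v → v ≤ t₂ →
      t₂ ≤ T → ‖delFull a x u y t₁ v t₂‖ ≤ B₃ * (y - x) ^ z₁ * (t₂ - t₁) ^ z₂)
    {p q t t' : ℝ} (hp : 0 ≤ p) (hq : q ≤ T) (ht : 0 ≤ t) (ht'T : t' ≤ T)
    {r : ℕ} {u : ℕ → ℝ} (hu : IsGrid p q r u)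
    {n : ℕ} {τ : ℕ → ℝ} (hτ : IsGrid t t' n τ) :
    ‖(∑ l ∈ Finset.range r, ∑ j ∈ Finset.range n, a (u l) (u (l+1)) (τ j) (τ (j+1)))
        - ∑ j ∈ Finset.range n, a p q (τ j) (τ (j+1))‖
      ≤ (B₁ + B₃ * 2 ^ z₂ * (t' - t) ^ z₂ * zK z₂) * 2 ^ z₁ * (q - p) ^ z₁ * zK z₁ := by
  have htt' : t ≤ t' := isGrid_le hτ
  have hD : 0 ≤ B₁ + B₃ * 2 ^ z₂ * (t' - t) ^ z₂ * zK z₂ := by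
    have h2 : (0:ℝ) ≤ 2 ^ z₂ := Real.rpow_nonneg (by norm_num) _
    have h3 : (0:ℝ) ≤ (t' - t) ^ z₂ := Real.rpow_nonneg (by linarith) _
    have := mul_nonneg (mul_nonneg (mul_nonneg hB₃ h2) h3) (zK_nonneg z₂)
    linarith
  refine youngA hz₁ hD (fun x y => ∑ j ∈ Finset.range n, a x y (τ j) (τ (j+1))) ?_ r u hu
  intro x w y hpx hxw hwy hyq
  have hx0 : 0 ≤ x := le_trans hp hpx
  have hyT : y ≤ T := le_trans hyq hq
  have hxy : x ≤ y := le_trans hxw hwy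
  have e : (∑ j ∈ Finset.range n, a x y (τ j) (τ (j+1)))
      - (∑ j ∈ Finset.range n, a x w (τ j) (τ (j+1)))
      - (∑ j ∈ Finset.range n, a w y (τ j) (τ (j+1)))
      = -∑ j ∈ Finset.range n, del1 a x w y (τ j) (τ (j+1)) := by
    rw [← Finset.sum_neg_distrib, ← Finset.sum_sub_distrib, ← Finset.sum_sub_distrib]
    refine Finset.sum_congr rfl fun j _ => ?_
    simp only [del1]; abel
  rw [e, norm_neg]
  -- inner sewing in the t-direction
  have hDin : 0 ≤ B₃ * (y - x) ^ z₁ :=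
    mul_nonneg hB₃ (Real.rpow_nonneg (by linarith) _)
  have inner := youngA (p := t) (q := t') hz₂ hDin (fun t₁ t₂ => del1 a x w y t₁ t₂) ?_ n τ hτ
  · have hend : ‖del1 a x w y t t'‖ ≤ B₁ * (y - x) ^ z₁ :=
      bd1 x w y t t' hx0 hxw hwy hyT ⟨ht, le_trans htt' ht'T⟩ ⟨le_trans ht htt', ht'T⟩
    calc ‖∑ j ∈ Finset.range n, del1 a x w y (τ j) (τ (j+1))‖
        ≤ ‖(∑ j ∈ Finset.range n, del1 a x w y (τ j) (τ (j+1))) - del1 a x w y t t'‖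
          + ‖del1 a x w y t t'‖ := norm_le_sub_add' _ _
      _ ≤ B₃ * (y - x) ^ z₁ * 2 ^ z₂ * (t' - t) ^ z₂ * zK z₂ + B₁ * (y - x) ^ z₁ :=
          add_le_add inner hend
      _ = (B₁ + B₃ * 2 ^ z₂ * (t' - t) ^ z₂ * zK z₂) * (y - x) ^ z₁ := by ring
  · intro t₁ v t₂ ht1 h1v hv2 ht2
    have eδ : del1 a x w y t₁ t₂ - del1 a x w y t₁ v - del1 a x w y v t₂
        = -delFull a x w y t₁ v t₂ := by
      simp only [delFull]; abel
    rw [eδ, norm_neg]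
    have := bd3 x w y t₁ v t₂ hx0 hxw hwy hyT (le_trans ht ht1) h1v hv2 (le_trans ht2 ht'T)
    calc ‖delFull a x w y t₁ v t₂‖ ≤ B₃ * (y - x) ^ z₁ * (t₂ - t₁) ^ z₂ := this
      _ = B₃ * (y - x) ^ z₁ * (t₂ - t₁) ^ z₂ := rfl

theorem blockEstT (hz₁ : 1 < z₁) (hz₂ : 1 < z₂) (hB₂ : 0 ≤ B₂) (hB₃ : 0 ≤ B₃)
    (bd2 : ∀ s₁ s₂ t₁ v t₂ : ℝ, s₁ ∈ Icc (0:ℝ) T → s₂ ∈ Icc (0:ℝ) T → 0 ≤ t₁ → t₁ ≤ v →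
      v ≤ t₂ → t₂ ≤ T → ‖del2 a s₁ s₂ t₁ v t₂‖ ≤ B₂ * (t₂ - t₁) ^ z₂)
    (bd3 : ∀ x u y t₁ v t₂ : ℝ, 0 ≤ x → x ≤ u → u ≤ y → y ≤ T → 0 ≤ t₁ → t₁ ≤ v → v ≤ t₂ →
      t₂ ≤ T → ‖delFull a x u y t₁ v t₂‖ ≤ B₃ * (y - x) ^ z₁ * (t₂ - t₁) ^ z₂)
    {s s' p q : ℝ} (hs : 0 ≤ s) (hs'T : s' ≤ T) (hp : 0 ≤ p) (hq : q ≤ T)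
    {m : ℕ} {σ : ℕ → ℝ} (hσ : IsGrid s s' m σ)
    {r : ℕ} {v : ℕ → ℝ} (hv : IsGrid p q r v) :
    ‖(∑ l ∈ Finset.range r, ∑ i ∈ Finset.range m, a (σ i) (σ (i+1)) (v l) (v (l+1)))
        - ∑ i ∈ Finset.range m, a (σ i) (σ (i+1)) p q‖
      ≤ (B₂ + B₃ * 2 ^ z₁ * (s' - s) ^ z₁ * zK z₁) * 2 ^ z₂ * (q - p) ^ z₂ * zK z₂ := by
  have hss' : s ≤ s' := isGrid_le hσ
  have hD : 0 ≤ B₂ + B₃ * 2 ^ z₁ * (s' - s) ^ z₁ * zK z₁ := by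
    have h2 : (0:ℝ) ≤ 2 ^ z₁ := Real.rpow_nonneg (by norm_num) _
    have h3 : (0:ℝ) ≤ (s' - s) ^ z₁ := Real.rpow_nonneg (by linarith) _
    have := mul_nonneg (mul_nonneg (mul_nonneg hB₃ h2) h3) (zK_nonneg z₁)
    linarith
  refine youngA hz₂ hD (fun t₁ t₂ => ∑ i ∈ Finset.range m, a (σ i) (σ (i+1)) t₁ t₂) ?_ r v hv
  intro t₁ w t₂ hpt1 h1w hw2 ht2q
  have ht10 : 0 ≤ t₁ := le_trans hp hpt1
  have ht2T : t₂ ≤ T := le_trans ht2q hq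
  have e : (∑ i ∈ Finset.range m, a (σ i) (σ (i+1)) t₁ t₂)
      - (∑ i ∈ Finset.range m, a (σ i) (σ (i+1)) t₁ w)
      - (∑ i ∈ Finset.range m, a (σ i) (σ (i+1)) w t₂)
      = -∑ i ∈ Finset.range m, del2 a (σ i) (σ (i+1)) t₁ w t₂ := by
    rw [← Finset.sum_neg_distrib, ← Finset.sum_sub_distrib, ← Finset.sum_sub_distrib]
    refine Finset.sum_congr rfl fun i _ => ?_
    simp only [del2]; abel
  rw [e, norm_neg]
  have hDin : 0 ≤ B₃ * (t₂ - t₁) ^ z₂ :=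
    mul_nonneg hB₃ (Real.rpow_nonneg (by linarith) _)
  have inner := youngA (p := s) (q := s') hz₁ hDin (fun x y => del2 a x y t₁ w t₂) ?_ m σ hσ
  · have hend : ‖del2 a s s' t₁ w t₂‖ ≤ B₂ * (t₂ - t₁) ^ z₂ :=
      bd2 s s' t₁ w t₂ ⟨hs, le_trans hss' hs'T⟩ ⟨le_trans hs hss', hs'T⟩ ht10 h1w hw2 ht2T
    calc ‖∑ i ∈ Finset.range m, del2 a (σ i) (σ (i+1)) t₁ w t₂‖
        ≤ ‖(∑ i ∈ Finset.range m, del2 a (σ i) (σ (i+1)) t₁ w t₂) - del2 a s s' t₁ w t₂‖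
          + ‖del2 a s s' t₁ w t₂‖ := norm_le_sub_add' _ _
      _ ≤ B₃ * (t₂ - t₁) ^ z₂ * 2 ^ z₁ * (s' - s) ^ z₁ * zK z₁ + B₂ * (t₂ - t₁) ^ z₂ :=
          add_le_add inner hend
      _ = (B₂ + B₃ * 2 ^ z₁ * (s' - s) ^ z₁ * zK z₁) * (t₂ - t₁) ^ z₂ := by ring
  · intro x u y hsx hxu huy hys'
    have eδ : del2 a x y t₁ w t₂ - del2 a x u t₁ w t₂ - del2 a u y t₁ w t₂
        = -delFull a x u y t₁ w t₂ := by
      rw [delFull_eq_del2]; abel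
    rw [eδ, norm_neg]
    have := bd3 x u y t₁ w t₂ (le_trans hs hsx) hxu huy (le_trans hys' hs'T) ht10 h1w hw2 ht2T
    calc ‖delFull a x u y t₁ w t₂‖ ≤ B₃ * (y - x) ^ z₁ * (t₂ - t₁) ^ z₂ := this
      _ = B₃ * (t₂ - t₁) ^ z₂ * (y - x) ^ z₁ := by ring

lemma sum_blocks {M' : Type*} [AddCommMonoid M'] (f : ℕ → M') (φ : ℕ → ℕ) (hφ0 : φ 0 = 0) :
    ∀ m : ℕ, (∀ i < m, φ i ≤ φ (i+1)) →
      ∑ l ∈ Finset.range (φ m), f l = ∑ i ∈ Finset.range m, ∑ l ∈ Finset.Ico (φ i) (φ (i+1)), f l := by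
  intro m
  induction m with
  | zero => simp [hφ0]
  | succ k ih =>
    intro hmono
    rw [Finset.sum_range_succ, ← ih (fun i hi => hmono i (by omega)),
      ← Finset.sum_range_add_sum_Ico f (hmono k (by omega))]

lemma phi_mono {φ : ℕ → ℕ} {m : ℕ} (hφmono : ∀ i < m, φ i ≤ φ (i+1)) :
    ∀ {i j : ℕ}, i ≤ j → j ≤ m → φ i ≤ φ j := by
  intro i j hij hjm
  induction j with
  | zero => simp_all
  | succ k ih =>
    rcases Nat.lt_or_ge i (k+1) with hlt | hge
    · exact le_trans (ih (by omega) (by omega)) (hφmono k (by omega))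
    · have : i = k + 1 := by omega
      simp [this]

theorem refineS (hz₁ : 1 < z₁) (hz₂ : 1 < z₂) (hB₁ : 0 ≤ B₁) (hB₃ : 0 ≤ B₃)
    (bd1 : ∀ x u y t₁ t₂ : ℝ, 0 ≤ x → x ≤ u → u ≤ y → y ≤ T → t₁ ∈ Icc (0:ℝ) T →
      t₂ ∈ Icc (0:ℝ) T → ‖del1 a x u y t₁ t₂‖ ≤ B₁ * (y - x) ^ z₁)
    (bd3 : ∀ x u y t₁ v t₂ : ℝ, 0 ≤ x → x ≤ u → u ≤ y → y ≤ T → 0 ≤ t₁ → t₁ ≤ v → v ≤ t₂ →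
      t₂ ≤ T → ‖delFull a x u y t₁ v t₂‖ ≤ B₃ * (y - x) ^ z₁ * (t₂ - t₁) ^ z₂)
    {s s' t t' : ℝ} (hs : 0 ≤ s) (hs'T : s' ≤ T) (ht : 0 ≤ t) (ht'T : t' ≤ T)
    {m : ℕ} {σ : ℕ → ℝ} (hσ : IsGrid s s' m σ)
    {M : ℕ} {ρ : ℕ → ℝ} (hρ : IsGrid s s' M ρ)
    {φ : ℕ → ℕ} (hφ0 : φ 0 = 0) (hφm : φ m = M) (hφmono : ∀ i < m, φ i ≤ φ (i+1))
    (hagree : ∀ i ≤ m, ρ (φ i) = σ i)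
    {n : ℕ} {τ : ℕ → ℝ} (hτ : IsGrid t t' n τ) :
    ‖(∑ l ∈ Finset.range M, ∑ j ∈ Finset.range n, a (ρ l) (ρ (l+1)) (τ j) (τ (j+1)))
      - ∑ i ∈ Finset.range m, ∑ j ∈ Finset.range n, a (σ i) (σ (i+1)) (τ j) (τ (j+1))‖
      ≤ ∑ i ∈ Finset.range m,
          (B₁ + B₃ * 2 ^ z₂ * (t' - t) ^ z₂ * zK z₂) * 2 ^ z₁ * (σ (i+1) - σ i) ^ z₁ * zK z₁ := by
  set F : ℕ → V := fun l => ∑ j ∈ Finset.range n, a (ρ l) (ρ (l+1)) (τ j) (τ (j+1)) with hF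
  have hsplit : ∑ l ∈ Finset.range M, F l
      = ∑ i ∈ Finset.range m, ∑ l ∈ Finset.Ico (φ i) (φ (i+1)), F l := by
    rw [← hφm]; exact sum_blocks F φ hφ0 m hφmono
  rw [hsplit, ← Finset.sum_sub_distrib]
  refine le_trans (norm_sum_le _ _) (Finset.sum_le_sum fun i hi => ?_)
  have him : i < m := Finset.mem_range.mp hi
  -- block grid
  set k := φ (i+1) - φ i with hk
  set u : ℕ → ℝ := fun l => ρ (φ i + l) with hu
  have hφiM : φ (i+1) ≤ M := by
    rw [← hφm]; exact phi_mono hφmono (by omega) (le_refl m)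
  have hublock : IsGrid (σ i) (σ (i+1)) k u := by
    refine ⟨?_, ?_, ?_⟩
    · simp only [hu, Nat.add_zero]; exact hagree i (by omega)
    · simp only [hu, hk]
      have : φ i + (φ (i+1) - φ i) = φ (i+1) := by
        have := hφmono i him; omega
      rw [this]; exact hagree (i+1) (by omega)
    · intro l hl
      simp only [hu]
      have : φ i + l < M := by omega
      exact hρ.2.2 (φ i + l) this
  have hsum_eq : ∑ l ∈ Finset.Ico (φ i) (φ (i+1)), F l
      = ∑ l ∈ Finset.range k, ∑ j ∈ Finset.range n, a (u l) (u (l+1)) (τ j) (τ (j+1)) := by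
    rw [Finset.sum_Ico_eq_sum_range]
    rfl
  rw [hsum_eq]
  have hσi0 : 0 ≤ σ i := le_trans hs (isGrid_mem hσ (by omega)).1
  have hσi1T : σ (i+1) ≤ T := le_trans (isGrid_mem hσ (by omega)).2 hs'T
  exact blockEstS hz₁ hz₂ hB₁ hB₃ bd1 bd3 hσi0 hσi1T ht ht'T hublock hτ

theorem refineT (hz₁ : 1 < z₁) (hz₂ : 1 < z₂) (hB₂ : 0 ≤ B₂) (hB₃ : 0 ≤ B₃)
    (bd2 : ∀ s₁ s₂ t₁ v t₂ : ℝ, s₁ ∈ Icc (0:ℝ) T → s₂ ∈ Icc (0:ℝ) T → 0 ≤ t₁ → t₁ ≤ v →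
      v ≤ t₂ → t₂ ≤ T → ‖del2 a s₁ s₂ t₁ v t₂‖ ≤ B₂ * (t₂ - t₁) ^ z₂)
    (bd3 : ∀ x u y t₁ v t₂ : ℝ, 0 ≤ x → x ≤ u → u ≤ y → y ≤ T → 0 ≤ t₁ → t₁ ≤ v → v ≤ t₂ →
      t₂ ≤ T → ‖delFull a x u y t₁ v t₂‖ ≤ B₃ * (y - x) ^ z₁ * (t₂ - t₁) ^ z₂)
    {s s' t t' : ℝ} (hs : 0 ≤ s) (hs'T : s' ≤ T) (ht : 0 ≤ t) (ht'T : t' ≤ T)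
    {m : ℕ} {σ : ℕ → ℝ} (hσ : IsGrid s s' m σ)
    {n : ℕ} {τ : ℕ → ℝ} (hτ : IsGrid t t' n τ)
    {N : ℕ} {θ : ℕ → ℝ} (hθ : IsGrid t t' N θ)
    {ψ : ℕ → ℕ} (hψ0 : ψ 0 = 0) (hψn : ψ n = N) (hψmono : ∀ j < n, ψ j ≤ ψ (j+1))
    (hagree : ∀ j ≤ n, θ (ψ j) = τ j) :
    ‖(∑ i ∈ Finset.range m, ∑ l ∈ Finset.range N, a (σ i) (σ (i+1)) (θ l) (θ (l+1)))
      - ∑ i ∈ Finset.range m, ∑ j ∈ Finset.range n, a (σ i) (σ (i+1)) (τ j) (τ (j+1))‖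
      ≤ ∑ j ∈ Finset.range n,
          (B₂ + B₃ * 2 ^ z₁ * (s' - s) ^ z₁ * zK z₁) * 2 ^ z₂ * (τ (j+1) - τ j) ^ z₂ * zK z₂ := by
  rw [Finset.sum_comm (f := fun i l => a (σ i) (σ (i+1)) (θ l) (θ (l+1))),
    Finset.sum_comm (f := fun i j => a (σ i) (σ (i+1)) (τ j) (τ (j+1)))]
  set F : ℕ → V := fun l => ∑ i ∈ Finset.range m, a (σ i) (σ (i+1)) (θ l) (θ (l+1)) with hF
  have hsplit : ∑ l ∈ Finset.range N, F l
      = ∑ j ∈ Finset.range n, ∑ l ∈ Finset.Ico (ψ j) (ψ (j+1)), F l := by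
    rw [← hψn]; exact sum_blocks F ψ hψ0 n hψmono
  rw [hsplit, ← Finset.sum_sub_distrib]
  refine le_trans (norm_sum_le _ _) (Finset.sum_le_sum fun j hj => ?_)
  have hjn : j < n := Finset.mem_range.mp hj
  set k := ψ (j+1) - ψ j with hk
  set v : ℕ → ℝ := fun l => θ (ψ j + l) with hv
  have hψjN : ψ (j+1) ≤ N := by
    rw [← hψn]; exact phi_mono hψmono (by omega) (le_refl n)
  have hvblock : IsGrid (τ j) (τ (j+1)) k v := by
    refine ⟨?_, ?_, ?_⟩
    · simp only [hv, Nat.add_zero]; exact hagree j (by omega)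
    · simp only [hv, hk]
      have : ψ j + (ψ (j+1) - ψ j) = ψ (j+1) := by
        have := hψmono j hjn; omega
      rw [this]; exact hagree (j+1) (by omega)
    · intro l hl
      simp only [hv]
      exact hθ.2.2 (ψ j + l) (by omega)
  have hsum_eq : ∑ l ∈ Finset.Ico (ψ j) (ψ (j+1)), F l
      = ∑ l ∈ Finset.range k, ∑ i ∈ Finset.range m, a (σ i) (σ (i+1)) (v l) (v (l+1)) := by
    rw [Finset.sum_Ico_eq_sum_range]
    rfl
  rw [hsum_eq]
  have hτj0 : 0 ≤ τ j := le_trans ht (isGrid_mem hτ (by omega)).1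
  have hτj1T : τ (j+1) ≤ T := le_trans (isGrid_mem hτ (by omega)).2 ht'T
  exact blockEstT hz₁ hz₂ hB₂ hB₃ bd2 bd3 hs hs'T hτj0 hτj1T hσ hvblock


/-- Common refinement of two grids of the same interval. -/
theorem commonRefine {s s' : ℝ} {m mb : ℕ} {σ σb : ℕ → ℝ}
    (hσ : IsGrid s s' m σ) (hσb : IsGrid s s' mb σb) :
    ∃ (M : ℕ) (ρ : ℕ → ℝ), IsGrid s s' M ρ ∧
      (∃ φ : ℕ → ℕ, φ 0 = 0 ∧ φ m = M ∧ (∀ i < m, φ i ≤ φ (i+1)) ∧ ∀ i ≤ m, ρ (φ i) = σ i) ∧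
      (∃ φ : ℕ → ℕ, φ 0 = 0 ∧ φ mb = M ∧ (∀ i < mb, φ i ≤ φ (i+1)) ∧ ∀ i ≤ mb, ρ (φ i) = σb i) := by
  classical
  set A : Finset ℝ :=
    (Finset.range (m+1)).image σ ∪ (Finset.range (mb+1)).image σb with hA
  have hmemA : ∀ x ∈ A, s ≤ x ∧ x ≤ s' := by
    intro x hx
    rw [hA, Finset.mem_union] at hx
    rcases hx with hx | hx
    · obtain ⟨i, hi, rfl⟩ := Finset.mem_image.mp hx
      exact isGrid_mem hσ (Nat.lt_succ_iff.mp (Finset.mem_range.mp hi))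
    · obtain ⟨i, hi, rfl⟩ := Finset.mem_image.mp hx
      exact isGrid_mem hσb (Nat.lt_succ_iff.mp (Finset.mem_range.mp hi))
  have hsA : s ∈ A := by
    rw [hA, Finset.mem_union]
    exact Or.inl (Finset.mem_image.mpr ⟨0, Finset.mem_range.mpr (by omega), hσ.1⟩)
  have hs'A : s' ∈ A := by
    rw [hA, Finset.mem_union]
    exact Or.inl (Finset.mem_image.mpr ⟨m, Finset.mem_range.mpr (by omega), hσ.2.1⟩)
  set c := A.card with hc
  have hc1 : 1 ≤ c := Finset.card_pos.mpr ⟨s, hsA⟩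
  set e := A.orderIsoOfFin (rfl : A.card = c) with he
  set M := c - 1 with hM
  set ρ : ℕ → ℝ := fun i => if h : i < c then (e ⟨i, h⟩ : ℝ) else s' with hρ
  have hρ_lt : ∀ i j (hi : i < c) (hj : j < c), i < j → ρ i < ρ j := by
    intro i j hi hj hij
    simp only [hρ, dif_pos hi, dif_pos hj]
    exact_mod_cast e.strictMono (show (⟨i, hi⟩ : Fin c) < ⟨j, hj⟩ from hij)
  have hρ0 : ρ 0 = s := by
    simp only [hρ, dif_pos (show 0 < c by omega)]
    have h1 : (e ⟨0, by omega⟩ : ℝ) ≤ s := by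
      have : e ⟨0, by omega⟩ ≤ ⟨s, hsA⟩ := by
        rw [show (⟨s, hsA⟩ : {x // x ∈ A}) = e (e.symm ⟨s, hsA⟩) by rw [e.apply_symm_apply]]
        exact e.monotone (Fin.mk_le_mk.mpr (Nat.zero_le _))
      exact_mod_cast this
    have h2 : s ≤ (e ⟨0, by omega⟩ : ℝ) := (hmemA _ (e ⟨0, by omega⟩).2).1
    linarith
  have hρM : ρ M = s' := by
    have hMc : M < c := by omega
    simp only [hρ, dif_pos hMc]
    have h1 : s' ≤ (e ⟨M, hMc⟩ : ℝ) := by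
      have : (⟨s', hs'A⟩ : {x // x ∈ A}) ≤ e ⟨M, hMc⟩ := by
        rw [show (⟨s', hs'A⟩ : {x // x ∈ A}) = e (e.symm ⟨s', hs'A⟩) by rw [e.apply_symm_apply]]
        exact e.monotone (Fin.mk_le_mk.mpr (Nat.le_sub_one_of_lt (e.symm ⟨s', hs'A⟩).2))
      exact_mod_cast this
    have h2 : (e ⟨M, hMc⟩ : ℝ) ≤ s' := (hmemA _ (e ⟨M, hMc⟩).2).2
    linarith
  have hρgrid : IsGrid s s' M ρ := by
    refine ⟨hρ0, hρM, fun i hi => hρ_lt i (i+1) (by omega) (by omega) (by omega)⟩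
  refine ⟨M, ρ, hρgrid, ?_, ?_⟩
  · -- φ for σ
    have hmem : ∀ i ≤ m, σ i ∈ A := fun i hi => by
      rw [hA, Finset.mem_union]
      exact Or.inl (Finset.mem_image.mpr ⟨i, Finset.mem_range.mpr (by omega), rfl⟩)
    set φ : ℕ → ℕ := fun i => if h : σ i ∈ A then (e.symm ⟨σ i, h⟩ : Fin c).val else 0 with hφ
    have hρφ : ∀ i ≤ m, ρ (φ i) = σ i := by
      intro i hi
      simp only [hφ, dif_pos (hmem i hi)]
      have hlt : ((e.symm ⟨σ i, hmem i hi⟩ : Fin c) : ℕ) < c := (e.symm ⟨σ i, hmem i hi⟩).2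
      simp only [hρ, dif_pos hlt]
      have : e ⟨(e.symm ⟨σ i, hmem i hi⟩ : Fin c).val, hlt⟩ = ⟨σ i, hmem i hi⟩ := by
        rw [Fin.eta]; exact e.apply_symm_apply _
      rw [this]
    have hφmono : ∀ i < m, φ i ≤ φ (i+1) := by
      intro i hi
      simp only [hφ, dif_pos (hmem i (by omega)), dif_pos (hmem (i+1) (by omega))]
      have hle : σ i ≤ σ (i+1) := le_of_lt (hσ.2.2 i hi)
      exact e.symm.monotone (Subtype.mk_le_mk.mpr hle)
    have hφ0 : φ 0 = 0 := by
      have h1 : ρ (φ 0) = s := by rw [hρφ 0 (by omega), hσ.1]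
      by_contra hne
      have hlt : (0:ℕ) < φ 0 := by omega
      have hφ0c : φ 0 < c := by
        simp only [hφ, dif_pos (hmem 0 (by omega))]
        exact (e.symm ⟨σ 0, hmem 0 (by omega)⟩).2
      have := hρ_lt 0 (φ 0) (by omega) hφ0c hlt
      rw [hρ0, h1] at this
      exact lt_irrefl s this
    have hφm : φ m = M := by
      have h1 : ρ (φ m) = s' := by rw [hρφ m (le_refl m), hσ.2.1]
      have hφmc : φ m < c := by
        simp only [hφ, dif_pos (hmem m (le_refl m))]
        exact (e.symm ⟨σ m, hmem m (le_refl m)⟩).2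
      by_contra hne
      have hlt : φ m < M := by omega
      have := hρ_lt (φ m) M hφmc (by omega) hlt
      rw [hρM, h1] at this
      exact lt_irrefl s' this
    exact ⟨φ, hφ0, hφm, hφmono, hρφ⟩
  · -- φ for σb (identical)
    have hmem : ∀ i ≤ mb, σb i ∈ A := fun i hi => by
      rw [hA, Finset.mem_union]
      exact Or.inr (Finset.mem_image.mpr ⟨i, Finset.mem_range.mpr (by omega), rfl⟩)
    set φ : ℕ → ℕ := fun i => if h : σb i ∈ A then (e.symm ⟨σb i, h⟩ : Fin c).val else 0 with hφ
    have hρφ : ∀ i ≤ mb, ρ (φ i) = σb i := by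
      intro i hi
      simp only [hφ, dif_pos (hmem i hi)]
      have hlt : ((e.symm ⟨σb i, hmem i hi⟩ : Fin c) : ℕ) < c := (e.symm ⟨σb i, hmem i hi⟩).2
      simp only [hρ, dif_pos hlt]
      have : e ⟨(e.symm ⟨σb i, hmem i hi⟩ : Fin c).val, hlt⟩ = ⟨σb i, hmem i hi⟩ := by
        rw [Fin.eta]; exact e.apply_symm_apply _
      rw [this]
    have hφmono : ∀ i < mb, φ i ≤ φ (i+1) := by
      intro i hi
      simp only [hφ, dif_pos (hmem i (by omega)), dif_pos (hmem (i+1) (by omega))]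
      have hle : σb i ≤ σb (i+1) := le_of_lt (hσb.2.2 i hi)
      exact e.symm.monotone (Subtype.mk_le_mk.mpr hle)
    have hφ0 : φ 0 = 0 := by
      have h1 : ρ (φ 0) = s := by rw [hρφ 0 (by omega), hσb.1]
      by_contra hne
      have hlt : (0:ℕ) < φ 0 := by omega
      have hφ0c : φ 0 < c := by
        simp only [hφ, dif_pos (hmem 0 (by omega))]
        exact (e.symm ⟨σb 0, hmem 0 (by omega)⟩).2
      have := hρ_lt 0 (φ 0) (by omega) hφ0c hlt
      rw [hρ0, h1] at this
      exact lt_irrefl s this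
    have hφm : φ mb = M := by
      have h1 : ρ (φ mb) = s' := by rw [hρφ mb (le_refl mb), hσb.2.1]
      have hφmc : φ mb < c := by
        simp only [hφ, dif_pos (hmem mb (le_refl mb))]
        exact (e.symm ⟨σb mb, hmem mb (le_refl mb)⟩).2
      by_contra hne
      have hlt : φ mb < M := by omega
      have := hρ_lt (φ mb) M hφmc (by omega) hlt
      rw [hρM, h1] at this
      exact lt_irrefl s' this
    exact ⟨φ, hφ0, hφm, hφmono, hρφ⟩


lemma sum_gaps {s s' η z : ℝ} (hz : 1 ≤ z) {m : ℕ} {σ : ℕ → ℝ}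
    (hσ : IsGrid s s' m σ) (hmesh : MeshLE m σ η) :
    ∑ i ∈ Finset.range m, (σ (i+1) - σ i) ^ z ≤ (s' - s) * η ^ (z - 1) := by
  match m with
  | 0 =>
    have : s = s' := by rw [← hσ.1, ← hσ.2.1]
    simp [this]
  | (m+1) =>
    have hη0 : 0 < η := lt_of_lt_of_le (sub_pos.mpr (hσ.2.2 0 (by omega))) (hmesh 0 (by omega))
    have hterm : ∀ i ∈ Finset.range (m+1),
        (σ (i+1) - σ i) ^ z ≤ (σ (i+1) - σ i) * η ^ (z - 1) := by
      intro i hi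
      have hgap : 0 < σ (i+1) - σ i := sub_pos.mpr (hσ.2.2 i (Finset.mem_range.mp hi))
      have : (σ (i+1) - σ i) ^ z = (σ (i+1) - σ i) * (σ (i+1) - σ i) ^ (z - 1) := by
        rw [show z = 1 + (z - 1) by ring, Real.rpow_add hgap, Real.rpow_one]
        ring_nf
      rw [this]
      exact mul_le_mul_of_nonneg_left
        (Real.rpow_le_rpow (le_of_lt hgap) (hmesh i (Finset.mem_range.mp hi)) (by linarith))
        (le_of_lt hgap)
    refine le_trans (Finset.sum_le_sum hterm) ?_
    rw [← Finset.sum_mul]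
    have : ∑ i ∈ Finset.range (m+1), (σ (i+1) - σ i) = s' - s := by
      rw [Finset.sum_range_sub, hσ.1, hσ.2.1]
    rw [this]

/-- the uniform constants -/
noncomputable def Cs (T z₁ z₂ B₁ B₃ : ℝ) : ℝ :=
  (B₁ + B₃ * 2 ^ z₂ * T ^ z₂ * zK z₂) * 2 ^ z₁ * zK z₁
noncomputable def Ct (T z₁ z₂ B₂ B₃ : ℝ) : ℝ :=
  (B₂ + B₃ * 2 ^ z₁ * T ^ z₁ * zK z₁) * 2 ^ z₂ * zK z₂

lemma Cs_nonneg (hT : 0 ≤ T) (hB₁ : 0 ≤ B₁) (hB₃ : 0 ≤ B₃) : 0 ≤ Cs T z₁ z₂ B₁ B₃ := by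
  have h1 : (0:ℝ) ≤ 2 ^ z₂ := Real.rpow_nonneg (by norm_num) _
  have h2 : (0:ℝ) ≤ T ^ z₂ := Real.rpow_nonneg hT _
  have h3 : (0:ℝ) ≤ 2 ^ z₁ := Real.rpow_nonneg (by norm_num) _
  have h4 := zK_nonneg z₁
  have h5 := zK_nonneg z₂
  have h6 : 0 ≤ B₁ + B₃ * 2 ^ z₂ * T ^ z₂ * zK z₂ := by positivity
  exact mul_nonneg (mul_nonneg h6 h3) h4

lemma Ct_nonneg (hT : 0 ≤ T) (hB₂ : 0 ≤ B₂) (hB₃ : 0 ≤ B₃) : 0 ≤ Ct T z₁ z₂ B₂ B₃ := by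
  have h1 : (0:ℝ) ≤ 2 ^ z₁ := Real.rpow_nonneg (by norm_num) _
  have h2 : (0:ℝ) ≤ T ^ z₁ := Real.rpow_nonneg hT _
  have h3 : (0:ℝ) ≤ 2 ^ z₂ := Real.rpow_nonneg (by norm_num) _
  have h4 := zK_nonneg z₁
  have h5 := zK_nonneg z₂
  have h6 : 0 ≤ B₂ + B₃ * 2 ^ z₁ * T ^ z₁ * zK z₁ := by positivity
  exact mul_nonneg (mul_nonneg h6 h3) h5

/-- one-sided refinement estimate -/
theorem oneSided (hz₁ : 1 < z₁) (hz₂ : 1 < z₂) (hB₁ : 0 ≤ B₁) (hB₂ : 0 ≤ B₂) (hB₃ : 0 ≤ B₃)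
    (bd1 : ∀ x u y t₁ t₂ : ℝ, 0 ≤ x → x ≤ u → u ≤ y → y ≤ T → t₁ ∈ Icc (0:ℝ) T →
      t₂ ∈ Icc (0:ℝ) T → ‖del1 a x u y t₁ t₂‖ ≤ B₁ * (y - x) ^ z₁)
    (bd2 : ∀ s₁ s₂ t₁ v t₂ : ℝ, s₁ ∈ Icc (0:ℝ) T → s₂ ∈ Icc (0:ℝ) T → 0 ≤ t₁ → t₁ ≤ v →
      v ≤ t₂ → t₂ ≤ T → ‖del2 a s₁ s₂ t₁ v t₂‖ ≤ B₂ * (t₂ - t₁) ^ z₂)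
    (bd3 : ∀ x u y t₁ v t₂ : ℝ, 0 ≤ x → x ≤ u → u ≤ y → y ≤ T → 0 ≤ t₁ → t₁ ≤ v → v ≤ t₂ →
      t₂ ≤ T → ‖delFull a x u y t₁ v t₂‖ ≤ B₃ * (y - x) ^ z₁ * (t₂ - t₁) ^ z₂)
    {s s' t t' : ℝ} (hs : 0 ≤ s) (hs'T : s' ≤ T) (ht : 0 ≤ t) (ht'T : t' ≤ T)
    {m : ℕ} {σ : ℕ → ℝ} (hσ : IsGrid s s' m σ)
    {n : ℕ} {τ : ℕ → ℝ} (hτ : IsGrid t t' n τ)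
    {ησ ητ : ℝ} (hησ : 0 < ησ) (hητ : 0 < ητ)
    (hmσ : MeshLE m σ ησ) (hmτ : MeshLE n τ ητ)
    {M : ℕ} {ρ : ℕ → ℝ} (hρ : IsGrid s s' M ρ)
    {φ : ℕ → ℕ} (hφ0 : φ 0 = 0) (hφm : φ m = M) (hφmono : ∀ i < m, φ i ≤ φ (i+1))
    (hagree : ∀ i ≤ m, ρ (φ i) = σ i)
    {N : ℕ} {θ : ℕ → ℝ} (hθ : IsGrid t t' N θ)
    {ψ : ℕ → ℕ} (hψ0 : ψ 0 = 0) (hψn : ψ n = N) (hψmono : ∀ j < n, ψ j ≤ ψ (j+1))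
    (hagreeτ : ∀ j ≤ n, θ (ψ j) = τ j) :
    ‖(∑ i ∈ Finset.range m, ∑ j ∈ Finset.range n, a (σ i) (σ (i+1)) (τ j) (τ (j+1)))
      - ∑ l ∈ Finset.range M, ∑ l' ∈ Finset.range N, a (ρ l) (ρ (l+1)) (θ l') (θ (l'+1))‖
      ≤ Cs T z₁ z₂ B₁ B₃ * (s' - s) * ησ ^ (z₁ - 1)
        + Ct T z₁ z₂ B₂ B₃ * (t' - t) * ητ ^ (z₂ - 1) := by
  have hss' : s ≤ s' := isGrid_le hσ
  have htt' : t ≤ t' := isGrid_le hτ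
  have hT0 : 0 ≤ T := le_trans (le_trans hs hss') hs'T
  -- step 1 : refine σ to ρ with τ fixed
  have step1 := refineS (T := T) hz₁ hz₂ hB₁ hB₃ bd1 bd3 hs hs'T ht ht'T hσ hρ hφ0 hφm hφmono hagree hτ
  -- step 2 : refine τ to θ with ρ fixed
  have step2 := refineT (T := T) hz₁ hz₂ hB₂ hB₃ bd2 bd3 hs hs'T ht ht'T hρ hτ hθ hψ0 hψn hψmono hagreeτ
  have hD1 : B₁ + B₃ * 2 ^ z₂ * (t' - t) ^ z₂ * zK z₂ ≤ B₁ + B₃ * 2 ^ z₂ * T ^ z₂ * zK z₂ := by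
    have h2 : (0:ℝ) ≤ 2 ^ z₂ := Real.rpow_nonneg (by norm_num) _
    have hle : (t' - t) ^ z₂ ≤ T ^ z₂ :=
      Real.rpow_le_rpow (by linarith) (by linarith) (by linarith)
    have := mul_le_mul_of_nonneg_right (mul_le_mul_of_nonneg_left hle (mul_nonneg hB₃ h2)) (zK_nonneg z₂)
    linarith [this]
  have hD2 : B₂ + B₃ * 2 ^ z₁ * (s' - s) ^ z₁ * zK z₁ ≤ B₂ + B₃ * 2 ^ z₁ * T ^ z₁ * zK z₁ := by
    have h2 : (0:ℝ) ≤ 2 ^ z₁ := Real.rpow_nonneg (by norm_num) _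
    have hle : (s' - s) ^ z₁ ≤ T ^ z₁ :=
      Real.rpow_le_rpow (by linarith) (by linarith) (by linarith)
    have := mul_le_mul_of_nonneg_right (mul_le_mul_of_nonneg_left hle (mul_nonneg hB₃ h2)) (zK_nonneg z₁)
    linarith [this]
  have hsg := sum_gaps (z := z₁) (by linarith) hσ hmσ
  have htg := sum_gaps (z := z₂) (by linarith) hτ hmτ
  have est1 : ‖(∑ l ∈ Finset.range M, ∑ j ∈ Finset.range n, a (ρ l) (ρ (l+1)) (τ j) (τ (j+1)))
      - ∑ i ∈ Finset.range m, ∑ j ∈ Finset.range n, a (σ i) (σ (i+1)) (τ j) (τ (j+1))‖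
      ≤ Cs T z₁ z₂ B₁ B₃ * (s' - s) * ησ ^ (z₁ - 1) := by
    refine le_trans step1 ?_
    have h3 : (0:ℝ) ≤ 2 ^ z₁ := Real.rpow_nonneg (by norm_num) _
    have hD1' : 0 ≤ B₁ + B₃ * 2 ^ z₂ * (t' - t) ^ z₂ * zK z₂ := by
      have h2 : (0:ℝ) ≤ 2 ^ z₂ := Real.rpow_nonneg (by norm_num) _
      have h4 : (0:ℝ) ≤ (t' - t) ^ z₂ := Real.rpow_nonneg (by linarith) _
      have := mul_nonneg (mul_nonneg (mul_nonneg hB₃ h2) h4) (zK_nonneg z₂)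
      linarith
    calc ∑ i ∈ Finset.range m,
          (B₁ + B₃ * 2 ^ z₂ * (t' - t) ^ z₂ * zK z₂) * 2 ^ z₁ * (σ (i+1) - σ i) ^ z₁ * zK z₁
        = (B₁ + B₃ * 2 ^ z₂ * (t' - t) ^ z₂ * zK z₂) * 2 ^ z₁ * zK z₁
            * ∑ i ∈ Finset.range m, (σ (i+1) - σ i) ^ z₁ := by
          rw [Finset.mul_sum]; exact Finset.sum_congr rfl fun i _ => by ring
      _ ≤ (B₁ + B₃ * 2 ^ z₂ * (t' - t) ^ z₂ * zK z₂) * 2 ^ z₁ * zK z₁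
            * ((s' - s) * ησ ^ (z₁ - 1)) := by
          refine mul_le_mul_of_nonneg_left hsg ?_
          exact mul_nonneg (mul_nonneg hD1' h3) (zK_nonneg z₁)
      _ ≤ Cs T z₁ z₂ B₁ B₃ * ((s' - s) * ησ ^ (z₁ - 1)) := by
          refine mul_le_mul_of_nonneg_right ?_ ?_
          · exact mul_le_mul_of_nonneg_right (mul_le_mul_of_nonneg_right hD1 h3) (zK_nonneg z₁)
          · exact mul_nonneg (by linarith) (Real.rpow_nonneg (le_of_lt hησ) _)
      _ = Cs T z₁ z₂ B₁ B₃ * (s' - s) * ησ ^ (z₁ - 1) := by ring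
  have est2 : ‖(∑ l ∈ Finset.range M, ∑ l' ∈ Finset.range N, a (ρ l) (ρ (l+1)) (θ l') (θ (l'+1)))
      - ∑ l ∈ Finset.range M, ∑ j ∈ Finset.range n, a (ρ l) (ρ (l+1)) (τ j) (τ (j+1))‖
      ≤ Ct T z₁ z₂ B₂ B₃ * (t' - t) * ητ ^ (z₂ - 1) := by
    refine le_trans step2 ?_
    have h3 : (0:ℝ) ≤ 2 ^ z₂ := Real.rpow_nonneg (by norm_num) _
    have hD2' : 0 ≤ B₂ + B₃ * 2 ^ z₁ * (s' - s) ^ z₁ * zK z₁ := by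
      have h2 : (0:ℝ) ≤ 2 ^ z₁ := Real.rpow_nonneg (by norm_num) _
      have h4 : (0:ℝ) ≤ (s' - s) ^ z₁ := Real.rpow_nonneg (by linarith) _
      have := mul_nonneg (mul_nonneg (mul_nonneg hB₃ h2) h4) (zK_nonneg z₁)
      linarith
    calc ∑ j ∈ Finset.range n,
          (B₂ + B₃ * 2 ^ z₁ * (s' - s) ^ z₁ * zK z₁) * 2 ^ z₂ * (τ (j+1) - τ j) ^ z₂ * zK z₂
        = (B₂ + B₃ * 2 ^ z₁ * (s' - s) ^ z₁ * zK z₁) * 2 ^ z₂ * zK z₂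
            * ∑ j ∈ Finset.range n, (τ (j+1) - τ j) ^ z₂ := by
          rw [Finset.mul_sum]; exact Finset.sum_congr rfl fun j _ => by ring
      _ ≤ (B₂ + B₃ * 2 ^ z₁ * (s' - s) ^ z₁ * zK z₁) * 2 ^ z₂ * zK z₂
            * ((t' - t) * ητ ^ (z₂ - 1)) := by
          refine mul_le_mul_of_nonneg_left htg ?_
          exact mul_nonneg (mul_nonneg hD2' h3) (zK_nonneg z₂)
      _ ≤ Ct T z₁ z₂ B₂ B₃ * ((t' - t) * ητ ^ (z₂ - 1)) := by
          refine mul_le_mul_of_nonneg_right ?_ ?_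
          · exact mul_le_mul_of_nonneg_right (mul_le_mul_of_nonneg_right hD2 h3) (zK_nonneg z₂)
          · exact mul_nonneg (by linarith) (Real.rpow_nonneg (le_of_lt hητ) _)
      _ = Ct T z₁ z₂ B₂ B₃ * (t' - t) * ητ ^ (z₂ - 1) := by ring
  calc ‖(∑ i ∈ Finset.range m, ∑ j ∈ Finset.range n, a (σ i) (σ (i+1)) (τ j) (τ (j+1)))
      - ∑ l ∈ Finset.range M, ∑ l' ∈ Finset.range N, a (ρ l) (ρ (l+1)) (θ l') (θ (l'+1))‖
      = ‖((∑ l ∈ Finset.range M, ∑ j ∈ Finset.range n, a (ρ l) (ρ (l+1)) (τ j) (τ (j+1)))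
            - ∑ i ∈ Finset.range m, ∑ j ∈ Finset.range n, a (σ i) (σ (i+1)) (τ j) (τ (j+1)))
          + ((∑ l ∈ Finset.range M, ∑ l' ∈ Finset.range N, a (ρ l) (ρ (l+1)) (θ l') (θ (l'+1)))
            - ∑ l ∈ Finset.range M, ∑ j ∈ Finset.range n, a (ρ l) (ρ (l+1)) (τ j) (τ (j+1)))‖ := by
        rw [← norm_neg]; congr 1; abel
    _ ≤ _ := by
        refine le_trans (norm_add_le _ _) ?_
        exact add_le_add est1 est2

/-- The key two-grid estimate. -/
theorem keyEst (hz₁ : 1 < z₁) (hz₂ : 1 < z₂) (hB₁ : 0 ≤ B₁) (hB₂ : 0 ≤ B₂) (hB₃ : 0 ≤ B₃)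
    (bd1 : ∀ x u y t₁ t₂ : ℝ, 0 ≤ x → x ≤ u → u ≤ y → y ≤ T → t₁ ∈ Icc (0:ℝ) T →
      t₂ ∈ Icc (0:ℝ) T → ‖del1 a x u y t₁ t₂‖ ≤ B₁ * (y - x) ^ z₁)
    (bd2 : ∀ s₁ s₂ t₁ v t₂ : ℝ, s₁ ∈ Icc (0:ℝ) T → s₂ ∈ Icc (0:ℝ) T → 0 ≤ t₁ → t₁ ≤ v →
      v ≤ t₂ → t₂ ≤ T → ‖del2 a s₁ s₂ t₁ v t₂‖ ≤ B₂ * (t₂ - t₁) ^ z₂)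
    (bd3 : ∀ x u y t₁ v t₂ : ℝ, 0 ≤ x → x ≤ u → u ≤ y → y ≤ T → 0 ≤ t₁ → t₁ ≤ v → v ≤ t₂ →
      t₂ ≤ T → ‖delFull a x u y t₁ v t₂‖ ≤ B₃ * (y - x) ^ z₁ * (t₂ - t₁) ^ z₂)
    {s s' t t' : ℝ} (hs : 0 ≤ s) (hs'T : s' ≤ T) (ht : 0 ≤ t) (ht'T : t' ≤ T)
    {m : ℕ} {σ : ℕ → ℝ} (hσ : IsGrid s s' m σ)
    {n : ℕ} {τ : ℕ → ℝ} (hτ : IsGrid t t' n τ)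
    {mb : ℕ} {σb : ℕ → ℝ} (hσb : IsGrid s s' mb σb)
    {nb : ℕ} {τb : ℕ → ℝ} (hτb : IsGrid t t' nb τb)
    {ησ ητ ησb ητb : ℝ} (hησ : 0 < ησ) (hητ : 0 < ητ) (hησb : 0 < ησb) (hητb : 0 < ητb)
    (hmσ : MeshLE m σ ησ) (hmτ : MeshLE n τ ητ)
    (hmσb : MeshLE mb σb ησb) (hmτb : MeshLE nb τb ητb) :
    ‖(∑ i ∈ Finset.range m, ∑ j ∈ Finset.range n, a (σ i) (σ (i+1)) (τ j) (τ (j+1)))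
      - ∑ i ∈ Finset.range mb, ∑ j ∈ Finset.range nb, a (σb i) (σb (i+1)) (τb j) (τb (j+1))‖
      ≤ Cs T z₁ z₂ B₁ B₃ * (s' - s) * (ησ ^ (z₁ - 1) + ησb ^ (z₁ - 1))
        + Ct T z₁ z₂ B₂ B₃ * (t' - t) * (ητ ^ (z₂ - 1) + ητb ^ (z₂ - 1)) := by
  obtain ⟨M, ρ, hρ, ⟨φ, hφ0, hφm, hφmono, hφag⟩, ⟨φb, hφb0, hφbm, hφbmono, hφbag⟩⟩ :=
    commonRefine hσ hσb
  obtain ⟨N, θ, hθ, ⟨ψ, hψ0, hψn, hψmono, hψag⟩, ⟨ψb, hψb0, hψbn, hψbmono, hψbag⟩⟩ :=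
    commonRefine hτ hτb
  have e1 := oneSided (T := T) hz₁ hz₂ hB₁ hB₂ hB₃ bd1 bd2 bd3 hs hs'T ht ht'T hσ hτ
    hησ hητ hmσ hmτ hρ hφ0 hφm hφmono hφag hθ hψ0 hψn hψmono hψag
  have e2 := oneSided (T := T) hz₁ hz₂ hB₁ hB₂ hB₃ bd1 bd2 bd3 hs hs'T ht ht'T hσb hτb
    hησb hητb hmσb hmτb hρ hφb0 hφbm hφbmono hφbag hθ hψb0 hψbn hψbmono hψbag
  calc ‖(∑ i ∈ Finset.range m, ∑ j ∈ Finset.range n, a (σ i) (σ (i+1)) (τ j) (τ (j+1)))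
      - ∑ i ∈ Finset.range mb, ∑ j ∈ Finset.range nb, a (σb i) (σb (i+1)) (τb j) (τb (j+1))‖
      ≤ ‖(∑ i ∈ Finset.range m, ∑ j ∈ Finset.range n, a (σ i) (σ (i+1)) (τ j) (τ (j+1)))
          - ∑ l ∈ Finset.range M, ∑ l' ∈ Finset.range N, a (ρ l) (ρ (l+1)) (θ l') (θ (l'+1))‖
        + ‖(∑ i ∈ Finset.range mb, ∑ j ∈ Finset.range nb, a (σb i) (σb (i+1)) (τb j) (τb (j+1)))
          - ∑ l ∈ Finset.range M, ∑ l' ∈ Finset.range N, a (ρ l) (ρ (l+1)) (θ l') (θ (l'+1))‖ := by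
        rw [show (∑ i ∈ Finset.range m, ∑ j ∈ Finset.range n, a (σ i) (σ (i+1)) (τ j) (τ (j+1)))
          - ∑ i ∈ Finset.range mb, ∑ j ∈ Finset.range nb, a (σb i) (σb (i+1)) (τb j) (τb (j+1))
          = ((∑ i ∈ Finset.range m, ∑ j ∈ Finset.range n, a (σ i) (σ (i+1)) (τ j) (τ (j+1)))
            - ∑ l ∈ Finset.range M, ∑ l' ∈ Finset.range N, a (ρ l) (ρ (l+1)) (θ l') (θ (l'+1)))
            - ((∑ i ∈ Finset.range mb, ∑ j ∈ Finset.range nb, a (σb i) (σb (i+1)) (τb j) (τb (j+1)))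
            - ∑ l ∈ Finset.range M, ∑ l' ∈ Finset.range N, a (ρ l) (ρ (l+1)) (θ l') (θ (l'+1)))
          from by abel]
        exact norm_sub_le _ _
    _ ≤ _ := by
        refine le_trans (add_le_add e1 e2) ?_
        ring_nf
        apply le_of_eq
        ring

-- ### uniform grids

noncomputable def ug (s s' : ℝ) (n : ℕ) (i : ℕ) : ℝ := s + (s' - s) * i / n

lemma ug_self (s : ℝ) (n i : ℕ) : ug s s n i = s := by simp [ug]

lemma ug_grid {s s' : ℝ} (h : s < s') (n : ℕ) : IsGrid s s' (n+1) (ug s s' (n+1)) := by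
  refine ⟨by simp [ug], ?_, ?_⟩
  · have hn : ((n:ℝ)+1) ≠ 0 := by positivity
    simp only [ug]
    push_cast
    field_simp
    ring
  · intro i _
    simp only [ug]
    have hn : (0:ℝ) < ((n:ℝ)+1) := by positivity
    have hss : (0:ℝ) < s' - s := by linarith
    have key : (s' - s) * ((i:ℕ):ℝ) / (((n+1:ℕ)):ℝ) < (s' - s) * (((i+1:ℕ)):ℝ) / (((n+1:ℕ)):ℝ) := by
      rw [div_lt_div_iff_of_pos_right (by push_cast; positivity)]
      push_cast
      nlinarith
    linarith

lemma ug_mesh {s s' : ℝ} (h : s ≤ s') (n : ℕ) :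
    MeshLE (n+1) (ug s s' (n+1)) ((s' - s) / (n+1)) := by
  intro i _
  simp only [ug]
  push_cast
  have hn : (0:ℝ) < (n:ℝ)+1 := by positivity
  have : s + (s' - s) * ((i:ℝ)+1) / ((n:ℝ)+1) - (s + (s' - s) * (i:ℝ) / ((n:ℝ)+1))
      = (s' - s)/((n:ℝ)+1) := by field_simp; ring
  rw [this]

lemma ug_mem {s s' : ℝ} (h : s ≤ s') {n i : ℕ} (hn : 0 < n) (hi : i ≤ n) :
    ug s s' n i ∈ Icc s s' := by
  simp only [ug, Set.mem_Icc]
  have hn' : (0:ℝ) < (n:ℝ) := by exact_mod_cast hn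
  have h0 : 0 ≤ s' - s := sub_nonneg.mpr h
  constructor
  · have : 0 ≤ (s' - s) * i / n := div_nonneg (mul_nonneg h0 (Nat.cast_nonneg i)) hn'.le
    linarith
  · have hii : (i:ℝ) ≤ (n:ℝ) := by exact_mod_cast hi
    have : (s' - s) * i / n ≤ (s' - s) := by
      rw [div_le_iff₀ hn']
      nlinarith
    linarith

-- ### the approximating sequence and its limit

noncomputable def FF {V : Type*} [NormedAddCommGroup V] (a : ℝ → ℝ → ℝ → ℝ → V)
    (k : ℕ) (s s' t t' : ℝ) : V :=
  ∑ i ∈ Finset.range (k+1), ∑ j ∈ Finset.range (k+1),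
    a (ug s s' (k+1) i) (ug s s' (k+1) (i+1)) (ug t t' (k+1) j) (ug t t' (k+1) (j+1))

open Classical in
noncomputable def Llim {V : Type*} [NormedAddCommGroup V] (a : ℝ → ℝ → ℝ → ℝ → V)
    (s s' t t' : ℝ) : V :=
  if h : ∃ v, Tendsto (fun k => FF a k s s' t t') atTop (nhds v) then h.choose else 0

section
variable {V : Type*} [NormedAddCommGroup V] {a : ℝ → ℝ → ℝ → ℝ → V}
variable {T z₁ z₂ B₁ B₂ B₃ : ℝ}

lemma Llim_spec {s s' t t' : ℝ}
    (h : ∃ v, Tendsto (fun k => FF a k s s' t t') atTop (nhds v)) :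
    Tendsto (fun k => FF a k s s' t t') atTop (nhds (Llim a s s' t t')) := by
  classical
  rw [Llim]
  rw [dif_pos h]
  exact h.choose_spec

lemma Llim_eq_of_tendsto {s s' t t' : ℝ} {v : V}
    (h : Tendsto (fun k => FF a k s s' t t') atTop (nhds v)) : Llim a s s' t t' = v :=
  tendsto_nhds_unique (Llim_spec ⟨v, h⟩) h

lemma FF_deg_s {T : ℝ}
    (ha0 : ∀ s₁ s₂ t₁ t₂ : ℝ, s₁ ∈ Icc (0:ℝ) T → s₂ ∈ Icc (0:ℝ) T → t₁ ∈ Icc (0:ℝ) T →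
      t₂ ∈ Icc (0:ℝ) T → (s₁ = s₂ ∨ t₁ = t₂) → a s₁ s₂ t₁ t₂ = 0)
    {s t t' : ℝ} (hs : s ∈ Icc (0:ℝ) T) (ht : 0 ≤ t) (htt' : t ≤ t') (ht'T : t' ≤ T) (k : ℕ) :
    FF a k s s t t' = 0 := by
  refine Finset.sum_eq_zero fun i hi => Finset.sum_eq_zero fun j hj => ?_
  have hj' : j < k+1 := Finset.mem_range.mp hj
  have h1 := ug_mem htt' (show 0 < k+1 by omega) (show j ≤ k+1 by omega)
  have h2 := ug_mem htt' (show 0 < k+1 by omega) (show j+1 ≤ k+1 by omega)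
  rw [ug_self, ug_self]
  refine ha0 s s _ _ hs hs ⟨le_trans ht h1.1, le_trans h1.2 ht'T⟩
    ⟨le_trans ht h2.1, le_trans h2.2 ht'T⟩ (Or.inl rfl)

lemma FF_deg_t {T : ℝ}
    (ha0 : ∀ s₁ s₂ t₁ t₂ : ℝ, s₁ ∈ Icc (0:ℝ) T → s₂ ∈ Icc (0:ℝ) T → t₁ ∈ Icc (0:ℝ) T →
      t₂ ∈ Icc (0:ℝ) T → (s₁ = s₂ ∨ t₁ = t₂) → a s₁ s₂ t₁ t₂ = 0)
    {s s' t : ℝ} (ht : t ∈ Icc (0:ℝ) T) (hs : 0 ≤ s) (hss' : s ≤ s') (hs'T : s' ≤ T) (k : ℕ) :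
    FF a k s s' t t = 0 := by
  refine Finset.sum_eq_zero fun i hi => Finset.sum_eq_zero fun j hj => ?_
  have hi' : i < k+1 := Finset.mem_range.mp hi
  have h1 := ug_mem hss' (show 0 < k+1 by omega) (show i ≤ k+1 by omega)
  have h2 := ug_mem hss' (show 0 < k+1 by omega) (show i+1 ≤ k+1 by omega)
  rw [ug_self, ug_self]
  refine ha0 _ _ t t ⟨le_trans hs h1.1, le_trans h1.2 hs'T⟩
    ⟨le_trans hs h2.1, le_trans h2.2 hs'T⟩ ht ht (Or.inr rfl)

lemma tendsto_Tdiv {T : ℝ} : Tendsto (fun N : ℕ => T / ((N:ℝ)+1)) atTop (nhds 0) := by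
  have := (Filter.tendsto_add_atTop_iff_nat 1).mpr (tendsto_const_div_atTop_nhds_zero_nat T)
  convert this using 2 with n
  push_cast
  ring

lemma tendsto_Tdiv_rpow {T w : ℝ} (hw : 0 < w) :
    Tendsto (fun N : ℕ => (T / ((N:ℝ)+1)) ^ w) atTop (nhds 0) := by
  have hc : ContinuousAt (fun x : ℝ => x ^ w) 0 :=
    Real.continuousAt_rpow_const 0 w (Or.inr (le_of_lt hw))
  have := hc.tendsto.comp (tendsto_Tdiv (T := T))
  simpa [Real.zero_rpow (ne_of_gt hw), Function.comp_def] using this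


lemma meshLE_mono {m : ℕ} {σ : ℕ → ℝ} {η η' : ℝ} (h : MeshLE m σ η) (hle : η ≤ η') :
    MeshLE m σ η' := fun i hi => le_trans (h i hi) hle

lemma ug_mesh_le {s s' : ℝ} (hss' : s ≤ s') (hs'T : s' - s ≤ T) {N k : ℕ} (hNk : N ≤ k) :
    MeshLE (k+1) (ug s s' (k+1)) (T / ((N:ℝ)+1)) := by
  refine meshLE_mono (ug_mesh hss' k) ?_
  have h1 : ((N:ℝ)+1) ≤ ((k:ℝ)+1) := by exact_mod_cast Nat.succ_le_succ hNk
  have h2 : (0:ℝ) ≤ T := le_trans (sub_nonneg.mpr hss') hs'T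
  have := div_le_div₀ h2 hs'T (by positivity : (0:ℝ) < (N:ℝ)+1) h1
  calc (s' - s) / ((k:ℕ)+1 : ℝ) = (s' - s) / ((k:ℝ)+1) := by push_cast; ring_nf
    _ ≤ T / ((N:ℝ)+1) := this

lemma FF_cauchy (hz₁ : 1 < z₁) (hz₂ : 1 < z₂) (hB₁ : 0 ≤ B₁) (hB₂ : 0 ≤ B₂) (hB₃ : 0 ≤ B₃)
    (bd1 : ∀ x u y t₁ t₂ : ℝ, 0 ≤ x → x ≤ u → u ≤ y → y ≤ T → t₁ ∈ Icc (0:ℝ) T →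
      t₂ ∈ Icc (0:ℝ) T → ‖del1 a x u y t₁ t₂‖ ≤ B₁ * (y - x) ^ z₁)
    (bd2 : ∀ s₁ s₂ t₁ v t₂ : ℝ, s₁ ∈ Icc (0:ℝ) T → s₂ ∈ Icc (0:ℝ) T → 0 ≤ t₁ → t₁ ≤ v →
      v ≤ t₂ → t₂ ≤ T → ‖del2 a s₁ s₂ t₁ v t₂‖ ≤ B₂ * (t₂ - t₁) ^ z₂)
    (bd3 : ∀ x u y t₁ v t₂ : ℝ, 0 ≤ x → x ≤ u → u ≤ y → y ≤ T → 0 ≤ t₁ → t₁ ≤ v → v ≤ t₂ →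
      t₂ ≤ T → ‖delFull a x u y t₁ v t₂‖ ≤ B₃ * (y - x) ^ z₁ * (t₂ - t₁) ^ z₂)
    {s s' t t' : ℝ} (hs : 0 ≤ s) (hss' : s < s') (hs'T : s' ≤ T)
    (ht : 0 ≤ t) (htt' : t < t') (ht'T : t' ≤ T) :
    CauchySeq (fun k => FF a k s s' t t') := by
  refine cauchySeq_of_le_tendsto_0
    (fun N => Cs T z₁ z₂ B₁ B₃ * (s'-s) * (2 * (T/((N:ℝ)+1))^(z₁-1))
            + Ct T z₁ z₂ B₂ B₃ * (t'-t) * (2 * (T/((N:ℝ)+1))^(z₂-1))) ?_ ?_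
  · intro n m N hn hm
    rw [dist_eq_norm]
    have hη : 0 < T/((N:ℝ)+1) := by
      have : (0:ℝ) < T := by linarith
      positivity
    have key := keyEst hz₁ hz₂ hB₁ hB₂ hB₃ bd1 bd2 bd3 hs hs'T ht ht'T
      (ug_grid hss' n) (ug_grid htt' n) (ug_grid hss' m) (ug_grid htt' m)
      hη hη hη hη
      (ug_mesh_le (le_of_lt hss') (by linarith) hn)
      (ug_mesh_le (le_of_lt htt') (by linarith) hn)
      (ug_mesh_le (le_of_lt hss') (by linarith) hm)
      (ug_mesh_le (le_of_lt htt') (by linarith) hm)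
    refine le_trans key (le_of_eq (by ring))
  · have h1 := tendsto_Tdiv_rpow (T := T) (w := z₁ - 1) (by linarith)
    have h2 := tendsto_Tdiv_rpow (T := T) (w := z₂ - 1) (by linarith)
    have := ((h1.const_mul (2:ℝ)).const_mul (Cs T z₁ z₂ B₁ B₃ * (s'-s))).add
      ((h2.const_mul (2:ℝ)).const_mul (Ct T z₁ z₂ B₂ B₃ * (t'-t)))
    simpa using this

lemma FF_tendsto [CompleteSpace V] (hz₁ : 1 < z₁) (hz₂ : 1 < z₂)
    (hB₁ : 0 ≤ B₁) (hB₂ : 0 ≤ B₂) (hB₃ : 0 ≤ B₃)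
    (bd1 : ∀ x u y t₁ t₂ : ℝ, 0 ≤ x → x ≤ u → u ≤ y → y ≤ T → t₁ ∈ Icc (0:ℝ) T →
      t₂ ∈ Icc (0:ℝ) T → ‖del1 a x u y t₁ t₂‖ ≤ B₁ * (y - x) ^ z₁)
    (bd2 : ∀ s₁ s₂ t₁ v t₂ : ℝ, s₁ ∈ Icc (0:ℝ) T → s₂ ∈ Icc (0:ℝ) T → 0 ≤ t₁ → t₁ ≤ v →
      v ≤ t₂ → t₂ ≤ T → ‖del2 a s₁ s₂ t₁ v t₂‖ ≤ B₂ * (t₂ - t₁) ^ z₂)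
    (bd3 : ∀ x u y t₁ v t₂ : ℝ, 0 ≤ x → x ≤ u → u ≤ y → y ≤ T → 0 ≤ t₁ → t₁ ≤ v → v ≤ t₂ →
      t₂ ≤ T → ‖delFull a x u y t₁ v t₂‖ ≤ B₃ * (y - x) ^ z₁ * (t₂ - t₁) ^ z₂)
    (ha0 : ∀ s₁ s₂ t₁ t₂ : ℝ, s₁ ∈ Icc (0:ℝ) T → s₂ ∈ Icc (0:ℝ) T → t₁ ∈ Icc (0:ℝ) T →
      t₂ ∈ Icc (0:ℝ) T → (s₁ = s₂ ∨ t₁ = t₂) → a s₁ s₂ t₁ t₂ = 0)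
    {s s' t t' : ℝ} (hs : 0 ≤ s) (hss' : s ≤ s') (hs'T : s' ≤ T)
    (ht : 0 ≤ t) (htt' : t ≤ t') (ht'T : t' ≤ T) :
    Tendsto (fun k => FF a k s s' t t') atTop (nhds (Llim a s s' t t')) := by
  rcases eq_or_lt_of_le hss' with rfl | hss
  · have h0 : (fun k => FF a k s s t t') = fun _ => (0:V) :=
      funext (FF_deg_s ha0 ⟨hs, hs'T⟩ ht htt' ht'T)
    refine Llim_spec ⟨0, ?_⟩
    rw [h0]; exact tendsto_const_nhds
  rcases eq_or_lt_of_le htt' with rfl | htt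
  · have h0 : (fun k => FF a k s s' t t) = fun _ => (0:V) :=
      funext (FF_deg_t ha0 ⟨ht, ht'T⟩ hs hss' hs'T)
    refine Llim_spec ⟨0, ?_⟩
    rw [h0]; exact tendsto_const_nhds
  · obtain ⟨v, hv⟩ := cauchySeq_tendsto_of_complete
      (FF_cauchy hz₁ hz₂ hB₁ hB₂ hB₃ bd1 bd2 bd3 hs hss hs'T ht htt ht'T)
    exact Llim_spec ⟨v, hv⟩

lemma Llim_deg_s {T : ℝ}
    (ha0 : ∀ s₁ s₂ t₁ t₂ : ℝ, s₁ ∈ Icc (0:ℝ) T → s₂ ∈ Icc (0:ℝ) T → t₁ ∈ Icc (0:ℝ) T →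
      t₂ ∈ Icc (0:ℝ) T → (s₁ = s₂ ∨ t₁ = t₂) → a s₁ s₂ t₁ t₂ = 0)
    {s t t' : ℝ} (hs : s ∈ Icc (0:ℝ) T) (ht : 0 ≤ t) (htt' : t ≤ t') (ht'T : t' ≤ T) :
    Llim a s s t t' = 0 := by
  refine Llim_eq_of_tendsto ?_
  have h0 : (fun k => FF a k s s t t') = fun _ => (0:V) :=
    funext (FF_deg_s ha0 hs ht htt' ht'T)
  rw [h0]; exact tendsto_const_nhds

lemma Llim_deg_t {T : ℝ}
    (ha0 : ∀ s₁ s₂ t₁ t₂ : ℝ, s₁ ∈ Icc (0:ℝ) T → s₂ ∈ Icc (0:ℝ) T → t₁ ∈ Icc (0:ℝ) T →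
      t₂ ∈ Icc (0:ℝ) T → (s₁ = s₂ ∨ t₁ = t₂) → a s₁ s₂ t₁ t₂ = 0)
    {s s' t : ℝ} (ht : t ∈ Icc (0:ℝ) T) (hs : 0 ≤ s) (hss' : s ≤ s') (hs'T : s' ≤ T) :
    Llim a s s' t t = 0 := by
  refine Llim_eq_of_tendsto ?_
  have h0 : (fun k => FF a k s s' t t) = fun _ => (0:V) :=
    funext (FF_deg_t ha0 ht hs hss' hs'T)
  rw [h0]; exact tendsto_const_nhds

lemma dist_Llim [CompleteSpace V] (hz₁ : 1 < z₁) (hz₂ : 1 < z₂)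
    (hB₁ : 0 ≤ B₁) (hB₂ : 0 ≤ B₂) (hB₃ : 0 ≤ B₃)
    (bd1 : ∀ x u y t₁ t₂ : ℝ, 0 ≤ x → x ≤ u → u ≤ y → y ≤ T → t₁ ∈ Icc (0:ℝ) T →
      t₂ ∈ Icc (0:ℝ) T → ‖del1 a x u y t₁ t₂‖ ≤ B₁ * (y - x) ^ z₁)
    (bd2 : ∀ s₁ s₂ t₁ v t₂ : ℝ, s₁ ∈ Icc (0:ℝ) T → s₂ ∈ Icc (0:ℝ) T → 0 ≤ t₁ → t₁ ≤ v →
      v ≤ t₂ → t₂ ≤ T → ‖del2 a s₁ s₂ t₁ v t₂‖ ≤ B₂ * (t₂ - t₁) ^ z₂)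
    (bd3 : ∀ x u y t₁ v t₂ : ℝ, 0 ≤ x → x ≤ u → u ≤ y → y ≤ T → 0 ≤ t₁ → t₁ ≤ v → v ≤ t₂ →
      t₂ ≤ T → ‖delFull a x u y t₁ v t₂‖ ≤ B₃ * (y - x) ^ z₁ * (t₂ - t₁) ^ z₂)
    (ha0 : ∀ s₁ s₂ t₁ t₂ : ℝ, s₁ ∈ Icc (0:ℝ) T → s₂ ∈ Icc (0:ℝ) T → t₁ ∈ Icc (0:ℝ) T →
      t₂ ∈ Icc (0:ℝ) T → (s₁ = s₂ ∨ t₁ = t₂) → a s₁ s₂ t₁ t₂ = 0)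
    {s s' t t' : ℝ} (hs : 0 ≤ s) (hss : s < s') (hs'T : s' ≤ T)
    (ht : 0 ≤ t) (htt : t < t') (ht'T : t' ≤ T)
    {m : ℕ} {σ : ℕ → ℝ} (hσ : IsGrid s s' m σ)
    {n : ℕ} {τ : ℕ → ℝ} (hτ : IsGrid t t' n τ)
    {ησ ητ : ℝ} (hησ : 0 < ησ) (hητ : 0 < ητ) (hmσ : MeshLE m σ ησ) (hmτ : MeshLE n τ ητ) :
    ‖(∑ i ∈ Finset.range m, ∑ j ∈ Finset.range n, a (σ i) (σ (i+1)) (τ j) (τ (j+1)))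
        - Llim a s s' t t'‖
      ≤ Cs T z₁ z₂ B₁ B₃ * (s' - s) * ησ ^ (z₁-1)
        + Ct T z₁ z₂ B₂ B₃ * (t' - t) * ητ ^ (z₂-1) := by
  have hT : (0:ℝ) < T := by linarith
  set S := ∑ i ∈ Finset.range m, ∑ j ∈ Finset.range n, a (σ i) (σ (i+1)) (τ j) (τ (j+1)) with hS
  have hkey : ∀ k : ℕ, ‖S - FF a k s s' t t'‖
      ≤ Cs T z₁ z₂ B₁ B₃ * (s'-s) * (ησ^(z₁-1) + (T/((k:ℝ)+1))^(z₁-1))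
        + Ct T z₁ z₂ B₂ B₃ * (t'-t) * (ητ^(z₂-1) + (T/((k:ℝ)+1))^(z₂-1)) := by
    intro k
    exact keyEst hz₁ hz₂ hB₁ hB₂ hB₃ bd1 bd2 bd3 hs hs'T ht ht'T hσ hτ
      (ug_grid hss k) (ug_grid htt k) hησ hητ (by positivity) (by positivity)
      hmσ hmτ (ug_mesh_le (le_of_lt hss) (by linarith) (le_refl k))
      (ug_mesh_le (le_of_lt htt) (by linarith) (le_refl k))
  have hlim1 : Tendsto (fun k => ‖S - FF a k s s' t t'‖) atTop (nhds ‖S - Llim a s s' t t'‖) :=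
    (tendsto_const_nhds.sub
      (FF_tendsto hz₁ hz₂ hB₁ hB₂ hB₃ bd1 bd2 bd3 ha0 hs (le_of_lt hss) hs'T ht
        (le_of_lt htt) ht'T)).norm
  have h1 := tendsto_Tdiv_rpow (T := T) (w := z₁ - 1) (by linarith)
  have h2 := tendsto_Tdiv_rpow (T := T) (w := z₂ - 1) (by linarith)
  have hlim2 : Tendsto (fun k : ℕ =>
      Cs T z₁ z₂ B₁ B₃ * (s'-s) * (ησ^(z₁-1) + (T/((k:ℝ)+1))^(z₁-1))
        + Ct T z₁ z₂ B₂ B₃ * (t'-t) * (ητ^(z₂-1) + (T/((k:ℝ)+1))^(z₂-1))) atTop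
      (nhds (Cs T z₁ z₂ B₁ B₃ * (s'-s) * (ησ^(z₁-1) + 0)
        + Ct T z₁ z₂ B₂ B₃ * (t'-t) * (ητ^(z₂-1) + 0))) := by
    exact (((tendsto_const_nhds.add h1).const_mul _).add
      ((tendsto_const_nhds.add h2).const_mul _))
  have := le_of_tendsto_of_tendsto' hlim1 hlim2 hkey
  simpa using this


def cat (m : ℕ) (σ σ' : ℕ → ℝ) : ℕ → ℝ := fun i => if i ≤ m then σ i else σ' (i - m)

lemma cat_le {m i : ℕ} (σ σ' : ℕ → ℝ) (h : i ≤ m) : cat m σ σ' i = σ i := if_pos h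
lemma cat_gt {m i : ℕ} (σ σ' : ℕ → ℝ) (h : ¬ i ≤ m) : cat m σ σ' i = σ' (i - m) := if_neg h

lemma cat_grid {s s' s'' : ℝ} {m m' : ℕ} {σ σ' : ℕ → ℝ}
    (hσ : IsGrid s s' m σ) (hσ' : IsGrid s' s'' m' σ') :
    IsGrid s s'' (m + m') (cat m σ σ') := by
  refine ⟨?_, ?_, ?_⟩
  · rw [cat_le σ σ' (Nat.zero_le m)]; exact hσ.1
  · by_cases h : m' = 0
    · subst h
      rw [cat_le σ σ' (by omega), Nat.add_zero, hσ.2.1, ← hσ'.1, hσ'.2.1]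
    · rw [cat_gt σ σ' (by omega), show m + m' - m = m' by omega]; exact hσ'.2.1
  · intro i hi
    by_cases h1 : i + 1 ≤ m
    · rw [cat_le σ σ' (by omega : i ≤ m), cat_le σ σ' h1]; exact hσ.2.2 i (by omega)
    · by_cases h2 : i ≤ m
      · have hieq : i = m := by omega
        subst hieq
        rw [cat_le σ σ' le_rfl, cat_gt σ σ' h1, show i + 1 - i = 1 by omega, hσ.2.1, ← hσ'.1]
        exact hσ'.2.2 0 (by omega)
      · rw [cat_gt σ σ' h2, cat_gt σ σ' (by omega), show i + 1 - m = (i - m) + 1 by omega]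
        exact hσ'.2.2 (i - m) (by omega)

lemma cat_mesh {m m' : ℕ} {σ σ' : ℕ → ℝ} {η : ℝ} (hσm : σ m = σ' 0)
    (h1 : MeshLE m σ η) (h2 : MeshLE m' σ' η) : MeshLE (m + m') (cat m σ σ') η := by
  intro i hi
  by_cases ha : i + 1 ≤ m
  · rw [cat_le σ σ' (by omega : i ≤ m), cat_le σ σ' ha]; exact h1 i (by omega)
  · by_cases hb : i ≤ m
    · have hieq : i = m := by omega
      subst hieq
      rw [cat_le σ σ' le_rfl, cat_gt σ σ' ha, show i + 1 - i = 1 by omega, hσm]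
      exact h2 0 (by omega)
    · rw [cat_gt σ σ' hb, cat_gt σ σ' (by omega), show i + 1 - m = (i - m) + 1 by omega]
      exact h2 (i - m) (by omega)

lemma cat_sum {W : Type*} [AddCommMonoid W] (g : ℝ → ℝ → W) {m m' : ℕ} {σ σ' : ℕ → ℝ}
    (hσm : σ m = σ' 0) :
    ∑ i ∈ Finset.range (m + m'), g (cat m σ σ' i) (cat m σ σ' (i+1))
      = (∑ i ∈ Finset.range m, g (σ i) (σ (i+1))) + ∑ i ∈ Finset.range m', g (σ' i) (σ' (i+1)) := by
  rw [← Finset.sum_range_add_sum_Ico _ (show m ≤ m + m' by omega)]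
  congr 1
  · refine Finset.sum_congr rfl fun i hi => ?_
    have him := Finset.mem_range.mp hi
    rw [cat_le σ σ' (by omega : i ≤ m), cat_le σ σ' (by omega : i + 1 ≤ m)]
  · rw [Finset.sum_Ico_eq_sum_range, show m + m' - m = m' by omega]
    refine Finset.sum_congr rfl fun l _ => ?_
    have hcat1 : cat m σ σ' (m + l) = σ' l := by
      by_cases h : l = 0
      · subst h; rw [cat_le σ σ' (by omega)]; simpa using hσm
      · rw [cat_gt σ σ' (by omega), show m + l - m = l by omega]
    have hcat2 : cat m σ σ' (m + l + 1) = σ' (l + 1) := by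
      rw [cat_gt σ σ' (by omega), show m + l + 1 - m = l + 1 by omega]
    rw [hcat1, hcat2]

lemma Llim_addS [CompleteSpace V] (hz₁ : 1 < z₁) (hz₂ : 1 < z₂)
    (hB₁ : 0 ≤ B₁) (hB₂ : 0 ≤ B₂) (hB₃ : 0 ≤ B₃)
    (bd1 : ∀ x u y t₁ t₂ : ℝ, 0 ≤ x → x ≤ u → u ≤ y → y ≤ T → t₁ ∈ Icc (0:ℝ) T →
      t₂ ∈ Icc (0:ℝ) T → ‖del1 a x u y t₁ t₂‖ ≤ B₁ * (y - x) ^ z₁)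
    (bd2 : ∀ s₁ s₂ t₁ v t₂ : ℝ, s₁ ∈ Icc (0:ℝ) T → s₂ ∈ Icc (0:ℝ) T → 0 ≤ t₁ → t₁ ≤ v →
      v ≤ t₂ → t₂ ≤ T → ‖del2 a s₁ s₂ t₁ v t₂‖ ≤ B₂ * (t₂ - t₁) ^ z₂)
    (bd3 : ∀ x u y t₁ v t₂ : ℝ, 0 ≤ x → x ≤ u → u ≤ y → y ≤ T → 0 ≤ t₁ → t₁ ≤ v → v ≤ t₂ →
      t₂ ≤ T → ‖delFull a x u y t₁ v t₂‖ ≤ B₃ * (y - x) ^ z₁ * (t₂ - t₁) ^ z₂)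
    (ha0 : ∀ s₁ s₂ t₁ t₂ : ℝ, s₁ ∈ Icc (0:ℝ) T → s₂ ∈ Icc (0:ℝ) T → t₁ ∈ Icc (0:ℝ) T →
      t₂ ∈ Icc (0:ℝ) T → (s₁ = s₂ ∨ t₁ = t₂) → a s₁ s₂ t₁ t₂ = 0)
    {s s' s'' t t' : ℝ} (hs : 0 ≤ s) (h1 : s ≤ s') (h2 : s' ≤ s'') (hs'' : s'' ≤ T)
    (ht : 0 ≤ t) (htt' : t ≤ t') (ht'T : t' ≤ T) :
    Llim a s s'' t t' = Llim a s s' t t' + Llim a s' s'' t t' := by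
  rcases eq_or_lt_of_le htt' with rfl | htt
  · rw [Llim_deg_t ha0 ⟨ht, ht'T⟩ hs (le_trans h1 h2) hs'',
      Llim_deg_t ha0 ⟨ht, ht'T⟩ hs h1 (le_trans h2 hs''),
      Llim_deg_t ha0 ⟨ht, ht'T⟩ (le_trans hs h1) h2 hs'']
    simp
  rcases eq_or_lt_of_le h1 with rfl | hss'
  · rw [Llim_deg_s ha0 ⟨hs, le_trans h2 hs''⟩ ht htt' ht'T, zero_add]
  rcases eq_or_lt_of_le h2 with rfl | hs's''
  · rw [Llim_deg_s ha0 ⟨le_trans hs h1, hs''⟩ ht htt' ht'T, add_zero]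
  have hT : (0:ℝ) < T := by linarith
  have hend : ∀ k : ℕ, ug s s' (k+1) (k+1) = ug s' s'' (k+1) 0 := by
    intro k
    rw [(ug_grid hss' k).2.1, (ug_grid hs's'' k).1]
  have hG : ∀ k : ℕ, FF a k s s' t t' + FF a k s' s'' t t'
      = ∑ i ∈ Finset.range ((k+1) + (k+1)), ∑ j ∈ Finset.range (k+1),
          a (cat (k+1) (ug s s' (k+1)) (ug s' s'' (k+1)) i)
            (cat (k+1) (ug s s' (k+1)) (ug s' s'' (k+1)) (i+1))
            (ug t t' (k+1) j) (ug t t' (k+1) (j+1)) := by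
    intro k
    rw [cat_sum (g := fun x y => ∑ j ∈ Finset.range (k+1),
      a x y (ug t t' (k+1) j) (ug t t' (k+1) (j+1))) (hend k)]
    rfl
  have hconv1 : Tendsto (fun k => FF a k s s' t t' + FF a k s' s'' t t') atTop
      (nhds (Llim a s s' t t' + Llim a s' s'' t t')) :=
    (FF_tendsto hz₁ hz₂ hB₁ hB₂ hB₃ bd1 bd2 bd3 ha0 hs (le_of_lt hss') (by linarith) ht
      (le_of_lt htt) ht'T).add
    (FF_tendsto hz₁ hz₂ hB₁ hB₂ hB₃ bd1 bd2 bd3 ha0 (by linarith) (le_of_lt hs's'') hs'' ht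
      (le_of_lt htt) ht'T)
  have hconv2 : Tendsto (fun k => FF a k s s' t t' + FF a k s' s'' t t') atTop
      (nhds (Llim a s s'' t t')) := by
    rw [tendsto_iff_norm_sub_tendsto_zero]
    refine squeeze_zero (fun k => norm_nonneg _)
      (g := fun k : ℕ => Cs T z₁ z₂ B₁ B₃ * (s'' - s) * (T/((k:ℝ)+1)) ^ (z₁-1)
        + Ct T z₁ z₂ B₂ B₃ * (t' - t) * (T/((k:ℝ)+1)) ^ (z₂-1)) ?_ ?_
    · intro k
      rw [hG k]
      refine dist_Llim hz₁ hz₂ hB₁ hB₂ hB₃ bd1 bd2 bd3 ha0 hs (by linarith) hs'' ht htt ht'T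
        (cat_grid (ug_grid hss' k) (ug_grid hs's'' k)) (ug_grid htt k)
        (by positivity) (by positivity)
        (cat_mesh (hend k) (ug_mesh_le (le_of_lt hss') (by linarith) (le_refl k))
          (ug_mesh_le (le_of_lt hs's'') (by linarith) (le_refl k)))
        (ug_mesh_le (le_of_lt htt) (by linarith) (le_refl k))
    · have ha := tendsto_Tdiv_rpow (T := T) (w := z₁ - 1) (by linarith)
      have hb := tendsto_Tdiv_rpow (T := T) (w := z₂ - 1) (by linarith)
      have := (ha.const_mul (Cs T z₁ z₂ B₁ B₃ * (s'' - s))).add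
        (hb.const_mul (Ct T z₁ z₂ B₂ B₃ * (t' - t)))
      simpa using this
  exact tendsto_nhds_unique hconv2 hconv1

lemma Llim_addT [CompleteSpace V] (hz₁ : 1 < z₁) (hz₂ : 1 < z₂)
    (hB₁ : 0 ≤ B₁) (hB₂ : 0 ≤ B₂) (hB₃ : 0 ≤ B₃)
    (bd1 : ∀ x u y t₁ t₂ : ℝ, 0 ≤ x → x ≤ u → u ≤ y → y ≤ T → t₁ ∈ Icc (0:ℝ) T →
      t₂ ∈ Icc (0:ℝ) T → ‖del1 a x u y t₁ t₂‖ ≤ B₁ * (y - x) ^ z₁)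
    (bd2 : ∀ s₁ s₂ t₁ v t₂ : ℝ, s₁ ∈ Icc (0:ℝ) T → s₂ ∈ Icc (0:ℝ) T → 0 ≤ t₁ → t₁ ≤ v →
      v ≤ t₂ → t₂ ≤ T → ‖del2 a s₁ s₂ t₁ v t₂‖ ≤ B₂ * (t₂ - t₁) ^ z₂)
    (bd3 : ∀ x u y t₁ v t₂ : ℝ, 0 ≤ x → x ≤ u → u ≤ y → y ≤ T → 0 ≤ t₁ → t₁ ≤ v → v ≤ t₂ →
      t₂ ≤ T → ‖delFull a x u y t₁ v t₂‖ ≤ B₃ * (y - x) ^ z₁ * (t₂ - t₁) ^ z₂)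
    (ha0 : ∀ s₁ s₂ t₁ t₂ : ℝ, s₁ ∈ Icc (0:ℝ) T → s₂ ∈ Icc (0:ℝ) T → t₁ ∈ Icc (0:ℝ) T →
      t₂ ∈ Icc (0:ℝ) T → (s₁ = s₂ ∨ t₁ = t₂) → a s₁ s₂ t₁ t₂ = 0)
    {s s' t t' t'' : ℝ} (hs : 0 ≤ s) (hss' : s ≤ s') (hs'T : s' ≤ T)
    (ht : 0 ≤ t) (h1 : t ≤ t') (h2 : t' ≤ t'') (ht'' : t'' ≤ T) :
    Llim a s s' t t'' = Llim a s s' t t' + Llim a s s' t' t'' := by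
  rcases eq_or_lt_of_le hss' with rfl | hss
  · rw [Llim_deg_s ha0 ⟨hs, hs'T⟩ ht (le_trans h1 h2) ht'',
      Llim_deg_s ha0 ⟨hs, hs'T⟩ ht h1 (le_trans h2 ht''),
      Llim_deg_s ha0 ⟨hs, hs'T⟩ (le_trans ht h1) h2 ht'']
    simp
  rcases eq_or_lt_of_le h1 with rfl | htt'
  · rw [Llim_deg_t ha0 ⟨ht, le_trans h2 ht''⟩ hs hss' hs'T, zero_add]
  rcases eq_or_lt_of_le h2 with rfl | ht't''
  · rw [Llim_deg_t ha0 ⟨le_trans ht h1, ht''⟩ hs hss' hs'T, add_zero]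
  have hT : (0:ℝ) < T := by linarith
  have hend : ∀ k : ℕ, ug t t' (k+1) (k+1) = ug t' t'' (k+1) 0 := by
    intro k
    rw [(ug_grid htt' k).2.1, (ug_grid ht't'' k).1]
  have hG : ∀ k : ℕ, FF a k s s' t t' + FF a k s s' t' t''
      = ∑ i ∈ Finset.range (k+1), ∑ j ∈ Finset.range ((k+1) + (k+1)),
          a (ug s s' (k+1) i) (ug s s' (k+1) (i+1))
            (cat (k+1) (ug t t' (k+1)) (ug t' t'' (k+1)) j)
            (cat (k+1) (ug t t' (k+1)) (ug t' t'' (k+1)) (j+1)) := by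
    intro k
    rw [show (∑ i ∈ Finset.range (k+1), ∑ j ∈ Finset.range ((k+1) + (k+1)),
          a (ug s s' (k+1) i) (ug s s' (k+1) (i+1))
            (cat (k+1) (ug t t' (k+1)) (ug t' t'' (k+1)) j)
            (cat (k+1) (ug t t' (k+1)) (ug t' t'' (k+1)) (j+1)))
        = ∑ i ∈ Finset.range (k+1),
            ((∑ j ∈ Finset.range (k+1), a (ug s s' (k+1) i) (ug s s' (k+1) (i+1))
              (ug t t' (k+1) j) (ug t t' (k+1) (j+1)))
            + ∑ j ∈ Finset.range (k+1), a (ug s s' (k+1) i) (ug s s' (k+1) (i+1))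
              (ug t' t'' (k+1) j) (ug t' t'' (k+1) (j+1)))
      from Finset.sum_congr rfl fun i _ =>
        cat_sum (g := fun x y => a (ug s s' (k+1) i) (ug s s' (k+1) (i+1)) x y) (hend k)]
    rw [Finset.sum_add_distrib]
    rfl
  have hconv1 : Tendsto (fun k => FF a k s s' t t' + FF a k s s' t' t'') atTop
      (nhds (Llim a s s' t t' + Llim a s s' t' t'')) :=
    (FF_tendsto hz₁ hz₂ hB₁ hB₂ hB₃ bd1 bd2 bd3 ha0 hs (le_of_lt hss) hs'T ht
      (le_of_lt htt') (by linarith)).add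
    (FF_tendsto hz₁ hz₂ hB₁ hB₂ hB₃ bd1 bd2 bd3 ha0 hs (le_of_lt hss) hs'T (by linarith)
      (le_of_lt ht't'') ht'')
  have hconv2 : Tendsto (fun k => FF a k s s' t t' + FF a k s s' t' t'') atTop
      (nhds (Llim a s s' t t'')) := by
    rw [tendsto_iff_norm_sub_tendsto_zero]
    refine squeeze_zero (fun k => norm_nonneg _)
      (g := fun k : ℕ => Cs T z₁ z₂ B₁ B₃ * (s' - s) * (T/((k:ℝ)+1)) ^ (z₁-1)
        + Ct T z₁ z₂ B₂ B₃ * (t'' - t) * (T/((k:ℝ)+1)) ^ (z₂-1)) ?_ ?_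
    · intro k
      rw [hG k]
      refine dist_Llim hz₁ hz₂ hB₁ hB₂ hB₃ bd1 bd2 bd3 ha0 hs hss hs'T ht (by linarith) ht''
        (ug_grid hss k) (cat_grid (ug_grid htt' k) (ug_grid ht't'' k))
        (by positivity) (by positivity)
        (ug_mesh_le (le_of_lt hss) (by linarith) (le_refl k))
        (cat_mesh (hend k) (ug_mesh_le (le_of_lt htt') (by linarith) (le_refl k))
          (ug_mesh_le (le_of_lt ht't'') (by linarith) (le_refl k)))
    · have ha := tendsto_Tdiv_rpow (T := T) (w := z₁ - 1) (by linarith)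
      have hb := tendsto_Tdiv_rpow (T := T) (w := z₂ - 1) (by linarith)
      have := (ha.const_mul (Cs T z₁ z₂ B₁ B₃ * (s' - s))).add
        (hb.const_mul (Ct T z₁ z₂ B₂ B₃ * (t'' - t)))
      simpa using this
  exact tendsto_nhds_unique hconv2 hconv1

end

lemma prod_rpow_le {d1 d2 w γ z : ℝ} (h1 : 0 ≤ d1) (h2 : 0 ≤ d2) (hw1 : d1 ≤ w) (hw2 : d2 ≤ w)
    (hγ : 0 < γ) (hγz : γ < z) : d1 ^ γ * d2 ^ (z - γ) ≤ w ^ z := by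
  have hw : 0 ≤ w := le_trans h1 hw1
  have e1 : d1 ^ γ ≤ w ^ γ := Real.rpow_le_rpow h1 hw1 (le_of_lt hγ)
  have e2 : d2 ^ (z - γ) ≤ w ^ (z - γ) := Real.rpow_le_rpow h2 hw2 (by linarith)
  calc d1 ^ γ * d2 ^ (z - γ) ≤ w ^ γ * w ^ (z - γ) :=
        mul_le_mul e1 e2 (Real.rpow_nonneg h2 _) (Real.rpow_nonneg hw _)
    _ = w ^ z := by
        rw [← Real.rpow_add' hw (by intro hcon; simp at hcon; linarith)]
        norm_num


end Stmt3Aux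

open Stmt3Aux in
/-- **Two-dimensional integration of small biincrements.**
If `a ∈ 𝒞𝒞_{2,2}(V)` has `δ₁a`, `δ₂a` and `δa` small in the sense of the stated Hölder
decompositions with exponents `z₁, z₂ > 1`, then there exists a continuous
`f : [0,T]² → V` such that the Riemann sums of `a` over grid partitions of any rectangle
converge to the rectangular increment of `f`. -/
theorem stmt3
    {V : Type*} [NormedAddCommGroup V] [NormedSpace ℝ V] [CompleteSpace V]
    (T : ℝ) (hT : 0 < T) (z₁ z₂ : ℝ) (hz₁ : 1 < z₁) (hz₂ : 1 < z₂)
    (a : ℝ → ℝ → ℝ → ℝ → V)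
    -- a ∈ 𝒞𝒞_{2,2}(V)
    (hac : ContinuousOn (fun q : (ℝ × ℝ) × ℝ × ℝ => a q.1.1 q.1.2 q.2.1 q.2.2)
      ((Icc 0 T ×ˢ Icc 0 T) ×ˢ (Icc 0 T ×ˢ Icc 0 T)))
    (ha0 : ∀ s₁ s₂ t₁ t₂ : ℝ, s₁ ∈ Icc 0 T → s₂ ∈ Icc 0 T → t₁ ∈ Icc 0 T →
      t₂ ∈ Icc 0 T → (s₁ = s₂ ∨ t₁ = t₂) → a s₁ s₂ t₁ t₂ = 0)
    -- (i) decomposition of δ₁a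
    (h1 : ∃ (N : ℕ) (h : Fin N → ℝ → ℝ → ℝ → ℝ → ℝ → V) (C γ : Fin N → ℝ),
      (∀ k, 0 ≤ C k) ∧ (∀ k, γ k ∈ Set.Ioo (0:ℝ) z₁) ∧
      (∀ k, ContinuousOn
        (fun q : (ℝ × ℝ × ℝ) × ℝ × ℝ => h k q.1.1 q.1.2.1 q.1.2.2 q.2.1 q.2.2)
        ((Icc 0 T ×ˢ Icc 0 T ×ˢ Icc 0 T) ×ˢ (Icc 0 T ×ˢ Icc 0 T)) ∧
        ∀ s₁ u s₂ t₁ t₂ : ℝ, s₁ ∈ Icc 0 T → u ∈ Icc 0 T → s₂ ∈ Icc 0 T →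
          t₁ ∈ Icc 0 T → t₂ ∈ Icc 0 T → (s₁ = u ∨ u = s₂ ∨ t₁ = t₂) →
          h k s₁ u s₂ t₁ t₂ = 0) ∧
      (∀ s₁ u s₂ t₁ t₂ : ℝ, s₁ ∈ Icc 0 T → u ∈ Icc 0 T → s₂ ∈ Icc 0 T →
        t₁ ∈ Icc 0 T → t₂ ∈ Icc 0 T →
        del1 a s₁ u s₂ t₁ t₂ = ∑ k, h k s₁ u s₂ t₁ t₂) ∧
      (∀ k, ∀ s₁ u s₂ t₁ t₂ : ℝ, s₁ ∈ Icc 0 T → u ∈ Icc 0 T → s₂ ∈ Icc 0 T →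
        t₁ ∈ Icc 0 T → t₂ ∈ Icc 0 T →
        ‖h k s₁ u s₂ t₁ t₂‖ ≤ C k * |u - s₁| ^ (γ k) * |s₂ - u| ^ (z₁ - γ k)))
    -- (ii) decomposition of δ₂a
    (h2 : ∃ (N : ℕ) (h : Fin N → ℝ → ℝ → ℝ → ℝ → ℝ → V) (C γ : Fin N → ℝ),
      (∀ k, 0 ≤ C k) ∧ (∀ k, γ k ∈ Set.Ioo (0:ℝ) z₂) ∧
      (∀ k, ContinuousOn
        (fun q : (ℝ × ℝ) × ℝ × ℝ × ℝ => h k q.1.1 q.1.2 q.2.1 q.2.2.1 q.2.2.2)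
        ((Icc 0 T ×ˢ Icc 0 T) ×ˢ (Icc 0 T ×ˢ Icc 0 T ×ˢ Icc 0 T)) ∧
        ∀ s₁ s₂ t₁ v t₂ : ℝ, s₁ ∈ Icc 0 T → s₂ ∈ Icc 0 T → t₁ ∈ Icc 0 T →
          v ∈ Icc 0 T → t₂ ∈ Icc 0 T → (s₁ = s₂ ∨ t₁ = v ∨ v = t₂) →
          h k s₁ s₂ t₁ v t₂ = 0) ∧
      (∀ s₁ s₂ t₁ v t₂ : ℝ, s₁ ∈ Icc 0 T → s₂ ∈ Icc 0 T → t₁ ∈ Icc 0 T →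
        v ∈ Icc 0 T → t₂ ∈ Icc 0 T →
        del2 a s₁ s₂ t₁ v t₂ = ∑ k, h k s₁ s₂ t₁ v t₂) ∧
      (∀ k, ∀ s₁ s₂ t₁ v t₂ : ℝ, s₁ ∈ Icc 0 T → s₂ ∈ Icc 0 T → t₁ ∈ Icc 0 T →
        v ∈ Icc 0 T → t₂ ∈ Icc 0 T →
        ‖h k s₁ s₂ t₁ v t₂‖ ≤ C k * |v - t₁| ^ (γ k) * |t₂ - v| ^ (z₂ - γ k)))
    -- (iii) ‖δa‖_{z₁,z₂} < ∞
    (h3 : ∃ (N : ℕ) (h : Fin N → ℝ → ℝ → ℝ → ℝ → ℝ → ℝ → V) (C γ₁ γ₂ : Fin N → ℝ),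
      (∀ k, 0 ≤ C k) ∧ (∀ k, γ₁ k ∈ Set.Ioo (0:ℝ) z₁) ∧ (∀ k, γ₂ k ∈ Set.Ioo (0:ℝ) z₂) ∧
      (∀ s₁ u₁ s₂ t₁ u₂ t₂ : ℝ, s₁ ∈ Icc 0 T → u₁ ∈ Icc 0 T → s₂ ∈ Icc 0 T →
        t₁ ∈ Icc 0 T → u₂ ∈ Icc 0 T → t₂ ∈ Icc 0 T →
        delFull a s₁ u₁ s₂ t₁ u₂ t₂ = ∑ k, h k s₁ u₁ s₂ t₁ u₂ t₂) ∧
      (∀ k, ∀ s₁ u₁ s₂ t₁ u₂ t₂ : ℝ, s₁ ∈ Icc 0 T → u₁ ∈ Icc 0 T → s₂ ∈ Icc 0 T →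
        t₁ ∈ Icc 0 T → u₂ ∈ Icc 0 T → t₂ ∈ Icc 0 T →
        ‖h k s₁ u₁ s₂ t₁ u₂ t₂‖ ≤ C k * |u₁ - s₁| ^ (γ₁ k) * |s₂ - u₁| ^ (z₁ - γ₁ k)
          * |u₂ - t₁| ^ (γ₂ k) * |t₂ - u₂| ^ (z₂ - γ₂ k))) :
    ∃ f : ℝ → ℝ → V,
      ContinuousOn (fun q : ℝ × ℝ => f q.1 q.2) (Icc 0 T ×ˢ Icc 0 T) ∧
      ∀ s s' t t' : ℝ, 0 ≤ s → s ≤ s' → s' ≤ T → 0 ≤ t → t ≤ t' → t' ≤ T →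
        ∀ ε > (0:ℝ), ∃ η > (0:ℝ), ∀ (m n : ℕ) (σ τ : ℕ → ℝ),
          IsGrid s s' m σ → IsGrid t t' n τ → MeshLE m σ η → MeshLE n τ η →
          ‖(∑ i ∈ Finset.range m, ∑ j ∈ Finset.range n,
              a (σ i) (σ (i + 1)) (τ j) (τ (j + 1)))
            - (f s' t' - f s t' - f s' t + f s t)‖ ≤ ε := by

  classical
  have hT0 : (0:ℝ) ≤ T := le_of_lt hT
  obtain ⟨N₁, f₁, C₁, γI, hC₁, hγI, _, hdec₁, hbd₁⟩ := h1
  obtain ⟨N₂, f₂, C₂, γJ, hC₂, hγJ, _, hdec₂, hbd₂⟩ := h2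
  obtain ⟨N₃, f₃, C₃, γ₃, γ₄, hC₃, hγ₃, hγ₄, hdec₃, hbd₃⟩ := h3
  set B₁ : ℝ := ∑ k, C₁ k with hB₁def
  set B₂ : ℝ := ∑ k, C₂ k with hB₂def
  set B₃ : ℝ := ∑ k, C₃ k with hB₃def
  have hB₁ : 0 ≤ B₁ := Finset.sum_nonneg fun k _ => hC₁ k
  have hB₂ : 0 ≤ B₂ := Finset.sum_nonneg fun k _ => hC₂ k
  have hB₃ : 0 ≤ B₃ := Finset.sum_nonneg fun k _ => hC₃ k
  have bd1 : ∀ x u y t₁ t₂ : ℝ, 0 ≤ x → x ≤ u → u ≤ y → y ≤ T → t₁ ∈ Icc (0:ℝ) T →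
      t₂ ∈ Icc (0:ℝ) T → ‖del1 a x u y t₁ t₂‖ ≤ B₁ * (y - x) ^ z₁ := by
    intro x u y t₁ t₂ hx hxu huy hyT ht₁ ht₂
    have hxI : x ∈ Icc (0:ℝ) T := ⟨hx, by linarith⟩
    have huI : u ∈ Icc (0:ℝ) T := ⟨by linarith, by linarith⟩
    have hyI : y ∈ Icc (0:ℝ) T := ⟨by linarith, hyT⟩
    rw [hdec₁ x u y t₁ t₂ hxI huI hyI ht₁ ht₂]
    refine le_trans (norm_sum_le _ _) ?_
    rw [hB₁def, Finset.sum_mul]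
    refine Finset.sum_le_sum fun k _ => ?_
    refine le_trans (hbd₁ k x u y t₁ t₂ hxI huI hyI ht₁ ht₂) ?_
    rw [abs_of_nonneg (by linarith : (0:ℝ) ≤ u - x), abs_of_nonneg (by linarith : (0:ℝ) ≤ y - u)]
    have hp := prod_rpow_le (by linarith : (0:ℝ) ≤ u - x) (by linarith : (0:ℝ) ≤ y - u)
      (by linarith : u - x ≤ y - x) (by linarith : y - u ≤ y - x) (hγI k).1 (hγI k).2
    calc C₁ k * (u - x) ^ (γI k) * (y - u) ^ (z₁ - γI k)
        = C₁ k * ((u - x) ^ (γI k) * (y - u) ^ (z₁ - γI k)) := by ring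
      _ ≤ C₁ k * (y - x) ^ z₁ := mul_le_mul_of_nonneg_left hp (hC₁ k)
  have bd2 : ∀ s₁ s₂ t₁ v t₂ : ℝ, s₁ ∈ Icc (0:ℝ) T → s₂ ∈ Icc (0:ℝ) T → 0 ≤ t₁ → t₁ ≤ v →
      v ≤ t₂ → t₂ ≤ T → ‖del2 a s₁ s₂ t₁ v t₂‖ ≤ B₂ * (t₂ - t₁) ^ z₂ := by
    intro s₁ s₂ t₁ v t₂ hs₁ hs₂ ht₁ h1v hv2 ht₂
    have ht₁I : t₁ ∈ Icc (0:ℝ) T := ⟨ht₁, by linarith⟩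
    have hvI : v ∈ Icc (0:ℝ) T := ⟨by linarith, by linarith⟩
    have ht₂I : t₂ ∈ Icc (0:ℝ) T := ⟨by linarith, ht₂⟩
    rw [hdec₂ s₁ s₂ t₁ v t₂ hs₁ hs₂ ht₁I hvI ht₂I]
    refine le_trans (norm_sum_le _ _) ?_
    rw [hB₂def, Finset.sum_mul]
    refine Finset.sum_le_sum fun k _ => ?_
    refine le_trans (hbd₂ k s₁ s₂ t₁ v t₂ hs₁ hs₂ ht₁I hvI ht₂I) ?_
    rw [abs_of_nonneg (by linarith : (0:ℝ) ≤ v - t₁), abs_of_nonneg (by linarith : (0:ℝ) ≤ t₂ - v)]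
    have hp := prod_rpow_le (by linarith : (0:ℝ) ≤ v - t₁) (by linarith : (0:ℝ) ≤ t₂ - v)
      (by linarith : v - t₁ ≤ t₂ - t₁) (by linarith : t₂ - v ≤ t₂ - t₁) (hγJ k).1 (hγJ k).2
    calc C₂ k * (v - t₁) ^ (γJ k) * (t₂ - v) ^ (z₂ - γJ k)
        = C₂ k * ((v - t₁) ^ (γJ k) * (t₂ - v) ^ (z₂ - γJ k)) := by ring
      _ ≤ C₂ k * (t₂ - t₁) ^ z₂ := mul_le_mul_of_nonneg_left hp (hC₂ k)
  have bd3 : ∀ x u y t₁ v t₂ : ℝ, 0 ≤ x → x ≤ u → u ≤ y → y ≤ T → 0 ≤ t₁ → t₁ ≤ v → v ≤ t₂ →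
      t₂ ≤ T → ‖delFull a x u y t₁ v t₂‖ ≤ B₃ * (y - x) ^ z₁ * (t₂ - t₁) ^ z₂ := by
    intro x u y t₁ v t₂ hx hxu huy hyT ht₁ h1v hv2 ht₂
    have hxI : x ∈ Icc (0:ℝ) T := ⟨hx, by linarith⟩
    have huI : u ∈ Icc (0:ℝ) T := ⟨by linarith, by linarith⟩
    have hyI : y ∈ Icc (0:ℝ) T := ⟨by linarith, hyT⟩
    have ht₁I : t₁ ∈ Icc (0:ℝ) T := ⟨ht₁, by linarith⟩
    have hvI : v ∈ Icc (0:ℝ) T := ⟨by linarith, by linarith⟩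
    have ht₂I : t₂ ∈ Icc (0:ℝ) T := ⟨by linarith, ht₂⟩
    rw [hdec₃ x u y t₁ v t₂ hxI huI hyI ht₁I hvI ht₂I]
    refine le_trans (norm_sum_le _ _) ?_
    rw [hB₃def, Finset.sum_mul, Finset.sum_mul]
    refine Finset.sum_le_sum fun k _ => ?_
    refine le_trans (hbd₃ k x u y t₁ v t₂ hxI huI hyI ht₁I hvI ht₂I) ?_
    rw [abs_of_nonneg (by linarith : (0:ℝ) ≤ u - x), abs_of_nonneg (by linarith : (0:ℝ) ≤ y - u),
      abs_of_nonneg (by linarith : (0:ℝ) ≤ v - t₁), abs_of_nonneg (by linarith : (0:ℝ) ≤ t₂ - v)]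
    have hp1 := prod_rpow_le (by linarith : (0:ℝ) ≤ u - x) (by linarith : (0:ℝ) ≤ y - u)
      (by linarith : u - x ≤ y - x) (by linarith : y - u ≤ y - x) (hγ₃ k).1 (hγ₃ k).2
    have hp2 := prod_rpow_le (by linarith : (0:ℝ) ≤ v - t₁) (by linarith : (0:ℝ) ≤ t₂ - v)
      (by linarith : v - t₁ ≤ t₂ - t₁) (by linarith : t₂ - v ≤ t₂ - t₁) (hγ₄ k).1 (hγ₄ k).2
    have h1n : (0:ℝ) ≤ (u - x) ^ (γ₃ k) * (y - u) ^ (z₁ - γ₃ k) :=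
      mul_nonneg (Real.rpow_nonneg (by linarith) _) (Real.rpow_nonneg (by linarith) _)
    have h2n : (0:ℝ) ≤ (v - t₁) ^ (γ₄ k) * (t₂ - v) ^ (z₂ - γ₄ k) :=
      mul_nonneg (Real.rpow_nonneg (by linarith) _) (Real.rpow_nonneg (by linarith) _)
    have hyx : (0:ℝ) ≤ (y - x) ^ z₁ := Real.rpow_nonneg (by linarith) _
    calc C₃ k * (u - x) ^ (γ₃ k) * (y - u) ^ (z₁ - γ₃ k) * (v - t₁) ^ (γ₄ k)
          * (t₂ - v) ^ (z₂ - γ₄ k)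
        = C₃ k * ((u - x) ^ (γ₃ k) * (y - u) ^ (z₁ - γ₃ k))
            * ((v - t₁) ^ (γ₄ k) * (t₂ - v) ^ (z₂ - γ₄ k)) := by ring
      _ ≤ C₃ k * (y - x) ^ z₁ * ((t₂ - t₁) ^ z₂) := by
          refine mul_le_mul (mul_le_mul_of_nonneg_left hp1 (hC₃ k)) hp2 h2n
            (mul_nonneg (hC₃ k) hyx)
      _ = C₃ k * (y - x) ^ z₁ * (t₂ - t₁) ^ z₂ := by ring
  have hCs := Cs_nonneg (T := T) (z₁ := z₁) (z₂ := z₂) (B₁ := B₁) (B₃ := B₃) hT0 hB₁ hB₃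
  have hCt := Ct_nonneg (T := T) (z₁ := z₁) (z₂ := z₂) (B₂ := B₂) (B₃ := B₃) hT0 hB₂ hB₃
  refine ⟨fun s t => Llim a 0 s 0 t, ?_, ?_⟩
  · -- continuity
    have hcontF : ∀ k : ℕ, ContinuousOn (fun q : ℝ × ℝ => FF a k 0 q.1 0 q.2)
        (Icc (0:ℝ) T ×ˢ Icc (0:ℝ) T) := by
      intro k
      simp only [FF]
      refine continuousOn_finset_sum _ fun i hi => continuousOn_finset_sum _ fun j hj => ?_
      have him : i < k+1 := Finset.mem_range.mp hi
      have hjm : j < k+1 := Finset.mem_range.mp hj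
      have hmaps : Set.MapsTo (fun q : ℝ × ℝ =>
          ((ug 0 q.1 (k+1) i, ug 0 q.1 (k+1) (i+1)), (ug 0 q.2 (k+1) j, ug 0 q.2 (k+1) (j+1))))
          (Icc (0:ℝ) T ×ˢ Icc (0:ℝ) T) ((Icc 0 T ×ˢ Icc 0 T) ×ˢ (Icc 0 T ×ˢ Icc 0 T)) := by
        intro q hq
        obtain ⟨hq1, hq2⟩ := hq
        have m1 := ug_mem hq1.1 (show 0 < k+1 by omega) (show i ≤ k+1 by omega)
        have m2 := ug_mem hq1.1 (show 0 < k+1 by omega) (show i+1 ≤ k+1 by omega)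
        have m3 := ug_mem hq2.1 (show 0 < k+1 by omega) (show j ≤ k+1 by omega)
        have m4 := ug_mem hq2.1 (show 0 < k+1 by omega) (show j+1 ≤ k+1 by omega)
        exact ⟨⟨⟨m1.1, le_trans m1.2 hq1.2⟩, ⟨m2.1, le_trans m2.2 hq1.2⟩⟩,
          ⟨⟨m3.1, le_trans m3.2 hq2.2⟩, ⟨m4.1, le_trans m4.2 hq2.2⟩⟩⟩
      have hcont_inner : Continuous (fun q : ℝ × ℝ =>
          ((ug 0 q.1 (k+1) i, ug 0 q.1 (k+1) (i+1)), (ug 0 q.2 (k+1) j, ug 0 q.2 (k+1) (j+1)))) := by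
        simp only [ug]
        fun_prop
      exact hac.comp hcont_inner.continuousOn hmaps
    have hd0 : ∀ k : ℕ, (0:ℝ) ≤ Cs T z₁ z₂ B₁ B₃ * T * (T/((k:ℝ)+1))^(z₁-1)
        + Ct T z₁ z₂ B₂ B₃ * T * (T/((k:ℝ)+1))^(z₂-1) := by
      intro k
      have e1 : (0:ℝ) ≤ (T/((k:ℝ)+1))^(z₁-1) := Real.rpow_nonneg (by positivity) _
      have e2 : (0:ℝ) ≤ (T/((k:ℝ)+1))^(z₂-1) := Real.rpow_nonneg (by positivity) _
      have := add_nonneg (mul_nonneg (mul_nonneg hCs hT0) e1)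
        (mul_nonneg (mul_nonneg hCt hT0) e2)
      linarith
    have hdist : ∀ k : ℕ, ∀ q ∈ (Icc (0:ℝ) T ×ˢ Icc (0:ℝ) T),
        dist (Llim a 0 q.1 0 q.2) (FF a k 0 q.1 0 q.2)
          ≤ Cs T z₁ z₂ B₁ B₃ * T * (T/((k:ℝ)+1))^(z₁-1)
            + Ct T z₁ z₂ B₂ B₃ * T * (T/((k:ℝ)+1))^(z₂-1) := by
      intro k q hq
      obtain ⟨hq1, hq2⟩ := hq
      rcases eq_or_lt_of_le hq1.1 with h10 | h1p
      · rw [dist_eq_norm, ← h10,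
          Llim_deg_s (T := T) ha0 ⟨le_refl 0, hT0⟩ (le_refl 0) hq2.1 hq2.2,
          FF_deg_s (T := T) ha0 ⟨le_refl 0, hT0⟩ (le_refl 0) hq2.1 hq2.2]
        simpa using hd0 k
      rcases eq_or_lt_of_le hq2.1 with h20 | h2p
      · rw [dist_eq_norm, ← h20,
          Llim_deg_t (T := T) ha0 ⟨le_refl 0, hT0⟩ (le_refl 0) hq1.1 hq1.2,
          FF_deg_t (T := T) ha0 ⟨le_refl 0, hT0⟩ (le_refl 0) hq1.1 hq1.2]
        simpa using hd0 k
      · rw [dist_eq_norm, norm_sub_rev]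
        have hdd := dist_Llim hz₁ hz₂ hB₁ hB₂ hB₃ bd1 bd2 bd3 ha0 (le_refl 0) h1p hq1.2
          (le_refl 0) h2p hq2.2 (ug_grid h1p k) (ug_grid h2p k)
          (show (0:ℝ) < T/((k:ℝ)+1) by positivity) (show (0:ℝ) < T/((k:ℝ)+1) by positivity)
          (ug_mesh_le (le_of_lt h1p) (by linarith [hq1.2]) (le_refl k))
          (ug_mesh_le (le_of_lt h2p) (by linarith [hq2.2]) (le_refl k))
        refine le_trans hdd ?_
        have e1 : (0:ℝ) ≤ (T/((k:ℝ)+1))^(z₁-1) := Real.rpow_nonneg (by positivity) _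
        have e2 : (0:ℝ) ≤ (T/((k:ℝ)+1))^(z₂-1) := Real.rpow_nonneg (by positivity) _
        have b1 : Cs T z₁ z₂ B₁ B₃ * (q.1 - 0) ≤ Cs T z₁ z₂ B₁ B₃ * T :=
          mul_le_mul_of_nonneg_left (by linarith [hq1.2]) hCs
        have b2 : Ct T z₁ z₂ B₂ B₃ * (q.2 - 0) ≤ Ct T z₁ z₂ B₂ B₃ * T :=
          mul_le_mul_of_nonneg_left (by linarith [hq2.2]) hCt
        exact add_le_add (mul_le_mul_of_nonneg_right b1 e1) (mul_le_mul_of_nonneg_right b2 e2)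
    have huc : TendstoUniformlyOn (fun k (q : ℝ × ℝ) => FF a k 0 q.1 0 q.2)
        (fun q : ℝ × ℝ => Llim a 0 q.1 0 q.2) atTop (Icc (0:ℝ) T ×ˢ Icc (0:ℝ) T) := by
      rw [Metric.tendstoUniformlyOn_iff]
      intro ε hε
      have ha1 := tendsto_Tdiv_rpow (T := T) (w := z₁ - 1) (by linarith)
      have hb1 := tendsto_Tdiv_rpow (T := T) (w := z₂ - 1) (by linarith)
      have hdlim : Tendsto (fun k : ℕ => Cs T z₁ z₂ B₁ B₃ * T * (T/((k:ℝ)+1))^(z₁-1)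
          + Ct T z₁ z₂ B₂ B₃ * T * (T/((k:ℝ)+1))^(z₂-1)) atTop (nhds 0) := by
        have := (ha1.const_mul (Cs T z₁ z₂ B₁ B₃ * T)).add
          (hb1.const_mul (Ct T z₁ z₂ B₂ B₃ * T))
        simpa [mul_assoc] using this
      filter_upwards [hdlim.eventually_lt_const hε] with k hk q hq
      exact lt_of_le_of_lt (hdist k q hq) hk
    exact huc.continuousOn (Filter.Eventually.of_forall hcontF).frequently
  · intro s s' t t' hs hss' hs'T ht htt' ht'T ε hε
    have hincr : Llim a 0 s' 0 t' - Llim a 0 s 0 t' - Llim a 0 s' 0 t + Llim a 0 s 0 t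
        = Llim a s s' t t' := by
      have e1 := Llim_addS hz₁ hz₂ hB₁ hB₂ hB₃ bd1 bd2 bd3 ha0 (le_refl (0:ℝ)) hs hss' hs'T
        (le_refl (0:ℝ)) (le_trans ht htt') ht'T
      have e2 := Llim_addT hz₁ hz₂ hB₁ hB₂ hB₃ bd1 bd2 bd3 ha0 hs hss' hs'T
        (le_refl (0:ℝ)) ht htt' ht'T
      have e3 := Llim_addS hz₁ hz₂ hB₁ hB₂ hB₃ bd1 bd2 bd3 ha0 (le_refl (0:ℝ)) hs hss' hs'T
        (le_refl (0:ℝ)) ht (by linarith)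
      rw [e1, e2, e3]
      abel
    simp only []
    rw [hincr]
    by_cases hdeg : s = s' ∨ t = t'
    · refine ⟨1, one_pos, ?_⟩
      intro m n σ τ hσ hτ _ _
      rcases hdeg with h | h
      · subst h
        have hm0 : m = 0 := isGrid_eq_forces hσ
        subst hm0
        rw [Llim_deg_s (T := T) ha0 ⟨hs, hs'T⟩ ht htt' ht'T]
        simpa using le_of_lt hε
      · subst h
        have hn0 : n = 0 := isGrid_eq_forces hτ
        subst hn0
        rw [Llim_deg_t (T := T) ha0 ⟨ht, ht'T⟩ hs hss' hs'T]
        simpa using le_of_lt hε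
    · push_neg at hdeg
      have hss : s < s' := lt_of_le_of_ne hss' hdeg.1
      have htt : t < t' := lt_of_le_of_ne htt' hdeg.2
      have hA : Tendsto (fun η : ℝ => η ^ (z₁ - 1)) (nhds (0:ℝ)) (nhds 0) := by
        have := (Real.continuousAt_rpow_const 0 (z₁-1) (Or.inr (by linarith))).tendsto
        simpa [Real.zero_rpow (show z₁ - 1 ≠ 0 from ne_of_gt (by linarith))] using this
      have hB : Tendsto (fun η : ℝ => η ^ (z₂ - 1)) (nhds (0:ℝ)) (nhds 0) := by
        have := (Real.continuousAt_rpow_const 0 (z₂-1) (Or.inr (by linarith))).tendsto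
        simpa [Real.zero_rpow (show z₂ - 1 ≠ 0 from ne_of_gt (by linarith))] using this
      have htend : Tendsto (fun η : ℝ => Cs T z₁ z₂ B₁ B₃ * (s' - s) * η ^ (z₁-1)
          + Ct T z₁ z₂ B₂ B₃ * (t' - t) * η ^ (z₂-1)) (nhdsWithin 0 (Ioi 0)) (nhds 0) := by
        have := ((hA.const_mul (Cs T z₁ z₂ B₁ B₃ * (s' - s))).add
          (hB.const_mul (Ct T z₁ z₂ B₂ B₃ * (t' - t)))).mono_left (nhdsWithin_le_nhds (s := Ioi (0:ℝ)))
        simpa [mul_assoc] using this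
      obtain ⟨η, hηlt, hηmem⟩ :=
        ((htend.eventually_lt_const hε).and eventually_mem_nhdsWithin).exists
      have hηpos : (0:ℝ) < η := hηmem
      refine ⟨η, hηpos, ?_⟩
      intro m n σ τ hσ hτ hmσ hmτ
      have hdd := dist_Llim hz₁ hz₂ hB₁ hB₂ hB₃ bd1 bd2 bd3 ha0 hs hss hs'T ht htt ht'T
        hσ hτ hηpos hηpos hmσ hmτ
      exact le_trans hdd (le_of_lt hηlt)
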